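/- Let p ≥ 1 be an integer and let N be a p-rooted almost-binary phylogenetic network on X whose maximal zig-zag trail decomposition consists of exactly two M-fences of length 4, exactly one W-fence of length 6, and N-fences of length 1. Then N has exactly 12 minimal support networks, and every minimal support network of N has exactly one reticulation. -/

import Mathlib

open Finset

variable {V : Type} [DecidableEq V] [Fintype V]

/-- The vertex set of the digraph given by the edge set `E`. -/
def verts (E : Finset (V × V)) : Finset V :=
  E.image Prod.fst ∪ E.image Prod.snd

/-- In-degree of `v` in the digraph with edge set `E`. -/
def indeg (E : Finset (V × V)) (v : V) : ℕ :=
  (E.filter fun e => e.2 = v).card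

/-- Out-degree of `v` in the digraph with edge set `E`. -/
def outdeg (E : Finset (V × V)) (v : V) : ℕ :=
  (E.filter fun e => e.1 = v).card

/-- `E` is (the edge set of) a `p`-rooted almost-binary phylogenetic network on `X`:
a finite simple DAG with exactly `p` in-degree-0 vertices, each of out-degree 1 or 2 (the roots),
whose set of in-degree-1, out-degree-0 vertices is `X` (the leaves), and all of whose other
vertices have in-degree and out-degree in `{1, 2}`. -/
structure IsPhyloNet (E : Finset (V × V)) (p : ℕ) (X : Finset V) : Prop where
  acyclic : ∀ v : V, ¬ Relation.TransGen (fun a b => (a, b) ∈ E) v v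
  roots_card : ((verts E).filter fun v => indeg E v = 0).card = p
  root_outdeg : ∀ v ∈ verts E, indeg E v = 0 → outdeg E v = 1 ∨ outdeg E v = 2
  leaves_eq : (verts E).filter (fun v => indeg E v = 1 ∧ outdeg E v = 0) = X
  internal_deg : ∀ v ∈ verts E, indeg E v ≠ 0 → v ∉ X →
    (indeg E v = 1 ∨ indeg E v = 2) ∧ (outdeg E v = 1 ∨ outdeg E v = 2)

/-- Two directed edges share a tail or share a head. -/
def Shares (e f : V × V) : Prop := e.1 = f.1 ∨ e.2 = f.2

/-- `S` is (the edge set of) a zig-zag trail of the digraph `E`: a subgraph with `m ≥ 1`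
edges which can be ordered so that consecutive edges share a head or share a tail. -/
def IsZigzagTrail (E S : Finset (V × V)) : Prop :=
  S ⊆ E ∧ ∃ l : List (V × V), l ≠ [] ∧ l.Nodup ∧ l.toFinset = S ∧ l.Chain' Shares

/-- A maximal zig-zag trail: one that is not a proper subgraph of another zig-zag trail. -/
def IsMaximalZigzagTrail (E S : Finset (V × V)) : Prop :=
  IsZigzagTrail E S ∧ ∀ S', IsZigzagTrail E S' → ¬ S ⊂ S'

/-- The `i`-th edge (0-indexed) of a zig-zag sequence on vertices `f 0, f 1, ...`;
when `down = true` the first edge descends (`f 0 > f 1`), and directions alternate. -/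
def zigEdge (f : ℕ → V) (down : Bool) (i : ℕ) : V × V :=
  if decide (i % 2 = 0) = down then (f i, f (i + 1)) else (f (i + 1), f i)

/-- `S` consists of the `m` distinct edges of the zig-zag sequence on `f 0, ..., f m`. -/
def IsZigzagShape (S : Finset (V × V)) (m : ℕ) (f : ℕ → V) (down : Bool) : Prop :=
  S = (Finset.range m).image (zigEdge f down) ∧
  ∀ i < m, ∀ j < m, zigEdge f down i = zigEdge f down j → i = j

/-- A crown: an even number `m` of edges written cyclically as `v₀ > v₁ < ⋯ < v_m = v₀`. -/
def IsCrown (S : Finset (V × V)) : Prop :=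
  ∃ m f, 1 ≤ m ∧ m % 2 = 0 ∧ f m = f 0 ∧ IsZigzagShape S m f true

/-- An M-fence: a non-crown with an even number `m` of edges,
of the form `v₀ < v₁ > ⋯ > v_m ≠ v₀`. -/
def IsMFence (S : Finset (V × V)) : Prop :=
  ¬ IsCrown S ∧ ∃ m f, 1 ≤ m ∧ m % 2 = 0 ∧ f m ≠ f 0 ∧ IsZigzagShape S m f false

/-- A W-fence: a non-crown with an even number `m` of edges,
of the form `v₀ > v₁ < ⋯ < v_m ≠ v₀`. -/
def IsWFence (S : Finset (V × V)) : Prop :=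
  ¬ IsCrown S ∧ ∃ m f, 1 ≤ m ∧ m % 2 = 0 ∧ f m ≠ f 0 ∧ IsZigzagShape S m f true

/-- An N-fence: a non-crown with an odd number `m` of edges,
of the form `v₀ > v₁ < ⋯ > v_m`. -/
def IsNFence (S : Finset (V × V)) : Prop :=
  ¬ IsCrown S ∧ ∃ m f, m % 2 = 1 ∧ IsZigzagShape S m f true

/-- A support network of `N = (V, E)`: a spanning subgraph that is itself a
`p`-rooted almost-binary phylogenetic network on `X` (identified with its edge set). -/
def IsSupportNet (E S : Finset (V × V)) (p : ℕ) (X : Finset V) : Prop :=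
  S ⊆ E ∧ verts S = verts E ∧ IsPhyloNet S p X

/-- A minimal support network: no support network is a proper subgraph of it. -/
def IsMinimalSupportNet (E S : Finset (V × V)) (p : ℕ) (X : Finset V) : Prop :=
  IsSupportNet E S p X ∧ ∀ S', IsSupportNet E S' p X → ¬ S' ⊂ S

/-- A minimum support network: one with the fewest edges among all support networks. -/
def IsMinimumSupportNet (E S : Finset (V × V)) (p : ℕ) (X : Finset V) : Prop :=
  IsSupportNet E S p X ∧ ∀ S', IsSupportNet E S' p X → S.card ≤ S'.card

/-- `S ⊆ Z` is A-admissible (degrees taken in the ambient network `E`):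
(C1) `S` contains every edge `(u,v)` of `Z` with `outdeg u = 1` or `indeg v = 1`;
(C2) of any two distinct edges of `Z` sharing a tail or a head, `S` contains at least one. -/
def AAdmissible (E Z S : Finset (V × V)) : Prop :=
  S ⊆ Z ∧
  (∀ e ∈ Z, (outdeg E e.1 = 1 ∨ indeg E e.2 = 1) → e ∈ S) ∧
  (∀ e₁ ∈ Z, ∀ e₂ ∈ Z, e₁ ≠ e₂ → Shares e₁ e₂ → e₁ ∈ S ∨ e₂ ∈ S)

/-- A B-admissible subset: an A-admissible subset none of whose proper subsets
is A-admissible. -/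
def BAdmissible (E Z S : Finset (V × V)) : Prop :=
  AAdmissible E Z S ∧ ∀ S', S' ⊂ S → ¬ AAdmissible E Z S'

/-- A C-admissible subset: an A-admissible subset of minimum cardinality. -/
def CAdmissible (E Z S : Finset (V × V)) : Prop :=
  AAdmissible E Z S ∧ ∀ S', AAdmissible E Z S' → S.card ≤ S'.card

/-- One subdivision step: an edge `(u, v)` is replaced by `(u, w), (w, v)` for a fresh
vertex `w`. -/
def SubdivStep (T T' : Finset (V × V)) : Prop :=
  ∃ u w v, (u, v) ∈ T ∧ w ∉ verts T ∧
    T' = insert (u, w) (insert (w, v) (T.erase (u, v)))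

/-- `S` is a subdivision of `T` (zero or more subdivision steps). -/
def IsSubdivisionOf (S T : Finset (V × V)) : Prop :=
  Relation.ReflTransGen SubdivStep T S

/-- A rooted binary phylogenetic tree on `X`: a 1-rooted network on `X` in which every
non-root, non-leaf vertex has in-degree 1 and out-degree 2. -/
def IsBinaryPhyloTree (T : Finset (V × V)) (X : Finset V) : Prop :=
  IsPhyloNet T 1 X ∧
  ∀ v ∈ verts T, indeg T v ≠ 0 → v ∉ X → indeg T v = 1 ∧ outdeg T v = 2

/-- `N = (V, E)` is tree-based: it has a support tree, i.e. a spanning subgraph that is a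
subdivision of some rooted binary phylogenetic tree on `X`. -/
def IsTreeBased (E : Finset (V × V)) (X : Finset V) : Prop :=
  ∃ S T, S ⊆ E ∧ verts S = verts E ∧ IsBinaryPhyloTree T X ∧ IsSubdivisionOf S T

/-- The underlying undirected simple graph of the digraph with edge set `S`. -/
def usym (S : Finset (V × V)) : SimpleGraph V where
  Adj u v := u ≠ v ∧ ((u, v) ∈ S ∨ (v, u) ∈ S)
  symm := ⟨fun _ _ h => ⟨h.1.symm, h.2.symm⟩⟩
  loopless := ⟨fun _ h => h.1 rfl⟩

/-- Two edges of `S` lie in a common block of the underlying undirected graph: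
they are equal or lie on a common cycle. -/
def SameBlock (S : Finset (V × V)) (e f : V × V) : Prop :=
  e = f ∨ ∃ (a : V) (w : (usym S).Walk a a), w.IsCycle ∧
    s(e.1, e.2) ∈ w.edges ∧ s(f.1, f.2) ∈ w.edges

/-- The number of reticulations (in-degree-2 vertices) contained in the block of the
edge `e` of `S`. -/
noncomputable def blockReticCount (S : Finset (V × V)) (e : V × V) : ℕ :=
  Set.ncard {v : V | indeg S v = 2 ∧ ∃ f ∈ S, SameBlock S e f ∧ (f.1 = v ∨ f.2 = v)}

/-- The level of the network with edge set `S`: the maximum number of reticulations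
contained in a block. -/
noncomputable def level (S : Finset (V × V)) : ℕ :=
  S.sup (blockReticCount S)

set_option linter.unusedSectionVars false
set_option maxHeartbeats 1000000

section Basic

variable {E S Z : Finset (V × V)} {p : ℕ} {X : Finset V}

lemma indeg_mono (h : S ⊆ E) (v : V) : indeg S v ≤ indeg E v :=
  Finset.card_le_card (Finset.filter_subset_filter _ h)

lemma outdeg_mono (h : S ⊆ E) (v : V) : outdeg S v ≤ outdeg E v :=
  Finset.card_le_card (Finset.filter_subset_filter _ h)

lemma indeg_pos_iff {v : V} : 0 < indeg E v ↔ ∃ e ∈ E, e.2 = v := by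
  simp [indeg, Finset.card_pos, Finset.filter_nonempty_iff]

lemma outdeg_pos_iff {v : V} : 0 < outdeg E v ↔ ∃ e ∈ E, e.1 = v := by
  simp [outdeg, Finset.card_pos, Finset.filter_nonempty_iff]

lemma fst_mem_verts {e : V × V} (he : e ∈ E) : e.1 ∈ verts E :=
  Finset.mem_union.2 (Or.inl (Finset.mem_image.2 ⟨e, he, rfl⟩))

lemma snd_mem_verts {e : V × V} (he : e ∈ E) : e.2 ∈ verts E :=
  Finset.mem_union.2 (Or.inr (Finset.mem_image.2 ⟨e, he, rfl⟩))

lemma mem_verts_iff {v : V} : v ∈ verts E ↔ ∃ e ∈ E, e.1 = v ∨ e.2 = v := by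
  constructor
  · intro h
    rcases Finset.mem_union.1 h with h | h <;> rcases Finset.mem_image.1 h with ⟨e, he, h2⟩
    · exact ⟨e, he, Or.inl h2⟩
    · exact ⟨e, he, Or.inr h2⟩
  · rintro ⟨e, he, h | h⟩
    · exact h ▸ fst_mem_verts he
    · exact h ▸ snd_mem_verts he

lemma mem_verts_of_indeg_pos {v : V} (h : 0 < indeg E v) : v ∈ verts E := by
  obtain ⟨e, he, h2⟩ := indeg_pos_iff.1 h
  exact h2 ▸ snd_mem_verts he

lemma mem_verts_of_outdeg_pos {v : V} (h : 0 < outdeg E v) : v ∈ verts E := by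
  obtain ⟨e, he, h2⟩ := outdeg_pos_iff.1 h
  exact h2 ▸ fst_mem_verts he

lemma indeg_eq_zero_of_not_mem_verts {v : V} (hv : v ∉ verts E) : indeg E v = 0 := by
  by_contra h
  exact hv (mem_verts_of_indeg_pos (Nat.pos_of_ne_zero h))

lemma outdeg_eq_zero_of_not_mem_verts {v : V} (hv : v ∉ verts E) : outdeg E v = 0 := by
  by_contra h
  exact hv (mem_verts_of_outdeg_pos (Nat.pos_of_ne_zero h))

lemma mem_X_iff (hN : IsPhyloNet E p X) {v : V} :
    v ∈ X ↔ v ∈ verts E ∧ indeg E v = 1 ∧ outdeg E v = 0 := by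
  rw [← hN.leaves_eq]; simp [Finset.mem_filter, and_assoc]

lemma indeg_le_two (hN : IsPhyloNet E p X) (v : V) : indeg E v ≤ 2 := by
  by_cases hv : v ∈ verts E
  · by_cases h0 : indeg E v = 0
    · omega
    · by_cases hX : v ∈ X
      · have := (mem_X_iff hN).1 hX; omega
      · have := (hN.internal_deg v hv h0 hX).1; omega
  · have := indeg_eq_zero_of_not_mem_verts hv; omega

lemma outdeg_le_two (hN : IsPhyloNet E p X) (v : V) : outdeg E v ≤ 2 := by
  by_cases hv : v ∈ verts E
  · by_cases h0 : indeg E v = 0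
    · have := hN.root_outdeg v hv h0; omega
    · by_cases hX : v ∈ X
      · have := (mem_X_iff hN).1 hX; omega
      · have := (hN.internal_deg v hv h0 hX).2; omega
  · have := outdeg_eq_zero_of_not_mem_verts hv; omega

lemma outdeg_pos_of_not_leaf (hN : IsPhyloNet E p X) {v : V} (hv : v ∈ verts E)
    (hX : v ∉ X) : 0 < outdeg E v := by
  by_cases h0 : indeg E v = 0
  · have := hN.root_outdeg v hv h0; omega
  · have := (hN.internal_deg v hv h0 hX).2; omega

/-- The key reformulation of being a support network. -/
def Good (E S : Finset (V × V)) : Prop :=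
  S ⊆ E ∧ ∀ v : V, (0 < indeg E v → 0 < indeg S v) ∧ (0 < outdeg E v → 0 < outdeg S v)

lemma verts_eq_of_good (h : Good E S) : verts S = verts E := by
  apply Finset.Subset.antisymm
  · intro v hv
    rcases mem_verts_iff.1 hv with ⟨e, he, h2⟩
    exact mem_verts_iff.2 ⟨e, h.1 he, h2⟩
  · intro v hv
    rcases mem_verts_iff.1 hv with ⟨e, he, h2 | h2⟩
    · have : 0 < outdeg S v := (h.2 v).2 (outdeg_pos_iff.2 ⟨e, he, h2⟩)
      exact mem_verts_of_outdeg_pos this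
    · have : 0 < indeg S v := (h.2 v).1 (indeg_pos_iff.2 ⟨e, he, h2⟩)
      exact mem_verts_of_indeg_pos this

lemma supportNet_iff (hN : IsPhyloNet E p X) :
    IsSupportNet E S p X ↔ Good E S := by
  constructor
  · rintro ⟨hsub, hverts, hS⟩
    refine ⟨hsub, fun v => ⟨?_, ?_⟩⟩
    · intro hin
      by_contra h0
      push_neg at h0
      have h0 : indeg S v = 0 := by omega
      have hvE : v ∈ verts E := mem_verts_of_indeg_pos hin
      have hroots : (verts E).filter (fun w => indeg E w = 0) ⊆
          ((verts S).filter (fun w => indeg S w = 0)).erase v := by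
        intro w hw
        rw [Finset.mem_filter] at hw
        rw [Finset.mem_erase, Finset.mem_filter]
        have hSw : indeg S w = 0 := by
          have := indeg_mono hsub w; omega
        refine ⟨fun hwv => by subst hwv; omega, hverts ▸ hw.1, hSw⟩
      have hvS : v ∈ (verts S).filter (fun w => indeg S w = 0) := by
        rw [Finset.mem_filter]; exact ⟨hverts ▸ hvE, h0⟩
      have hcard := Finset.card_le_card hroots
      rw [Finset.card_erase_of_mem hvS] at hcard
      have hpos : 0 < ((verts S).filter (fun w => indeg S w = 0)).card :=
        Finset.card_pos.2 ⟨v, hvS⟩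
      have e1 := hN.roots_card
      have e2 := hS.roots_card
      omega
    · intro hout
      have hvE : v ∈ verts E := mem_verts_of_outdeg_pos hout
      have hvS : v ∈ verts S := hverts ▸ hvE
      have hvX : v ∉ X := by
        intro hvX
        have := (mem_X_iff hN).1 hvX
        omega
      by_cases h0 : indeg S v = 0
      · have := hS.root_outdeg v hvS h0; omega
      · have := (hS.internal_deg v hvS h0 hvX).2; omega
  · intro h
    have hverts := verts_eq_of_good h
    obtain ⟨hsub, hgood⟩ := h
    have hrootset : (verts S).filter (fun w => indeg S w = 0) =
        (verts E).filter (fun w => indeg E w = 0) := by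
      rw [hverts]
      apply Finset.filter_congr
      intro w hw
      constructor
      · intro hSw
        by_contra hEw
        have := (hgood w).1 (Nat.pos_of_ne_zero hEw)
        omega
      · intro hEw
        have := indeg_mono hsub w
        omega
    refine ⟨hsub, hverts, ?_, ?_, ?_, ?_, ?_⟩
    · intro v hvv
      exact (hN.acyclic v) (Relation.TransGen.mono (fun a b hab => hsub hab) _ _ hvv)
    · rw [hrootset]; exact hN.roots_card
    · intro v hvS h0
      have hvE : v ∈ verts E := hverts ▸ hvS
      have h0E : indeg E v = 0 := by
        by_contra hEw
        have := (hgood v).1 (Nat.pos_of_ne_zero hEw)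
        omega
      have h1 := hN.root_outdeg v hvE h0E
      have h2 := (hgood v).2 (by omega)
      have h3 := outdeg_mono hsub v
      omega
    · rw [← hN.leaves_eq, hverts]
      apply Finset.filter_congr
      intro w hw
      constructor
      · rintro ⟨h1, h2⟩
        have houtE : outdeg E w = 0 := by
          by_contra hEw
          have := (hgood w).2 (Nat.pos_of_ne_zero hEw)
          omega
        have hinE : 0 < indeg E w := by
          by_contra hEw
          push_neg at hEw
          have h0E : indeg E w = 0 := by omega
          have := hN.root_outdeg w hw h0E
          omega
        have hX : w ∈ X := by
          by_contra hX
          have := (hN.internal_deg w hw (by omega) hX).2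
          omega
        have := (mem_X_iff hN).1 hX
        exact ⟨this.2.1, this.2.2⟩
      · rintro ⟨h1, h2⟩
        have h3 := (hgood w).1 (by omega)
        have h4 := indeg_mono hsub w
        have h5 := outdeg_mono hsub w
        omega
    · intro v hvS h0 hX
      have hvE : v ∈ verts E := hverts ▸ hvS
      have h1 : 0 < indeg E v := by
        have := indeg_mono hsub v; omega
      have h2 := (hN.internal_deg v hvE (by omega) hX)
      have h3 := (hgood v).2 (by omega)
      have h4 := outdeg_mono hsub v
      have h5 := indeg_mono hsub v
      have h6 := indeg_le_two hN v
      omega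

lemma minimalSupportNet_iff (hN : IsPhyloNet E p X) :
    IsMinimalSupportNet E S p X ↔ Good E S ∧ ∀ S', Good E S' → ¬ S' ⊂ S := by
  unfold IsMinimalSupportNet
  rw [supportNet_iff hN]
  constructor
  · rintro ⟨h1, h2⟩
    exact ⟨h1, fun S' hS' => h2 S' ((supportNet_iff hN).2 hS')⟩
  · rintro ⟨h1, h2⟩
    exact ⟨h1, fun S' hS' => h2 S' ((supportNet_iff hN).1 hS')⟩

end Basic
section Trails

variable {E S Z : Finset (V × V)} {p : ℕ} {X : Finset V} {f : ℕ → V}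

lemma zigF0 : zigEdge f false 0 = (f 1, f 0) := by simp [zigEdge]
lemma zigF1 : zigEdge f false 1 = (f 1, f 2) := by simp [zigEdge]
lemma zigF2 : zigEdge f false 2 = (f 3, f 2) := by simp [zigEdge]
lemma zigF3 : zigEdge f false 3 = (f 3, f 4) := by simp [zigEdge]
lemma zigT0 : zigEdge f true 0 = (f 0, f 1) := by simp [zigEdge]
lemma zigT1 : zigEdge f true 1 = (f 2, f 1) := by simp [zigEdge]
lemma zigT2 : zigEdge f true 2 = (f 2, f 3) := by simp [zigEdge]
lemma zigT3 : zigEdge f true 3 = (f 4, f 3) := by simp [zigEdge]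
lemma zigT4 : zigEdge f true 4 = (f 4, f 5) := by simp [zigEdge]
lemma zigT5 : zigEdge f true 5 = (f 6, f 5) := by simp [zigEdge]

lemma card_of_shape {m : ℕ} {d : Bool} (h : IsZigzagShape S m f d) : S.card = m := by
  rw [h.1, Finset.card_image_of_injOn, Finset.card_range]
  intro i hi j hj hij
  exact h.2 i (Finset.mem_range.1 hi) j (Finset.mem_range.1 hj) hij

lemma max_no_extra (hmax : IsMaximalZigzagTrail E Z)
    (l : List (V × V)) (hlne : l ≠ []) (hnd : l.Nodup) (hch : l.Chain' Shares)
    (hsub : l.toFinset ⊆ E) (hZl : Z ⊆ l.toFinset) (g : V × V)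
    (hgl : g ∈ l) (hgZ : g ∉ Z) : False := by
  apply hmax.2 l.toFinset ⟨hsub, l, hlne, hnd, rfl, hch⟩
  rw [Finset.ssubset_def]
  exact ⟨hZl, fun h => hgZ (h (List.mem_toFinset.2 hgl))⟩

/-- Data of an M-fence of length 4. -/
structure MData (E Z : Finset (V × V)) (f : ℕ → V) : Prop where
  hmax : IsMaximalZigzagTrail E Z
  hset : Z = {(f 1, f 0), (f 1, f 2), (f 3, f 2), (f 3, f 4)}
  h02 : f 0 ≠ f 2
  h24 : f 2 ≠ f 4
  h04 : f 0 ≠ f 4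
  h13 : f 1 ≠ f 3

/-- Data of a W-fence of length 6. -/
structure WData (E Z : Finset (V × V)) (f : ℕ → V) : Prop where
  hmax : IsMaximalZigzagTrail E Z
  hset : Z = {(f 0, f 1), (f 2, f 1), (f 2, f 3), (f 4, f 3), (f 4, f 5), (f 6, f 5)}
  h13 : f 1 ≠ f 3
  h35 : f 3 ≠ f 5
  h15 : f 1 ≠ f 5
  h02 : f 0 ≠ f 2
  h24 : f 2 ≠ f 4
  h46 : f 4 ≠ f 6
  h04 : f 0 ≠ f 4
  h26 : f 2 ≠ f 6
  h06 : f 0 ≠ f 6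

lemma card3_eq {a b c : V × V} (h1 : a ≠ b) (h2 : a ≠ c) (h3 : b ≠ c) :
    ({a, b, c} : Finset (V × V)).card = 3 := by
  rw [Finset.card_insert_of_notMem (by simp [h1, h2]),
    Finset.card_insert_of_notMem (by simp [h3]), Finset.card_singleton]

lemma ne_of_fst {a b : V × V} (h : a.1 ≠ b.1) : a ≠ b := fun h' => h (congrArg Prod.fst h')
lemma ne_of_snd {a b : V × V} (h : a.2 ≠ b.2) : a ≠ b := fun h' => h (congrArg Prod.snd h')

lemma mdata_mk (hmax : IsMaximalZigzagTrail E Z) (hM : IsMFence Z) (hcard : Z.card = 4) :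
    ∃ f, MData E Z f := by
  obtain ⟨-, m, f, h1, h2, hne, hsh⟩ := hM
  have hm : m = 4 := by rw [← card_of_shape hsh, hcard]
  subst hm
  have inj := hsh.2
  refine ⟨f, hmax, ?_, ?_, ?_, Ne.symm hne, ?_⟩
  · rw [hsh.1, show Finset.range 4 = {0, 1, 2, 3} from rfl]
    simp only [Finset.image_insert, Finset.image_singleton, zigF0, zigF1, zigF2, zigF3]
  · intro h
    have := inj 0 (by norm_num) 1 (by norm_num) (by rw [zigF0, zigF1, h])
    omega
  · intro h
    have := inj 2 (by norm_num) 3 (by norm_num) (by rw [zigF2, zigF3, h])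
    omega
  · intro h
    have := inj 1 (by norm_num) 2 (by norm_num) (by rw [zigF1, zigF2, h])
    omega

lemma wdata_mk (hN : IsPhyloNet E p X) (hmax : IsMaximalZigzagTrail E Z)
    (hW : IsWFence Z) (hcard : Z.card = 6) : ∃ f, WData E Z f := by
  obtain ⟨-, m, f, h1, h2, hne, hsh⟩ := hW
  have hm : m = 6 := by rw [← card_of_shape hsh, hcard]
  subst hm
  have inj := hsh.2
  have hZE : Z ⊆ E := hmax.1.1
  have hset : Z = {(f 0, f 1), (f 2, f 1), (f 2, f 3), (f 4, f 3), (f 4, f 5), (f 6, f 5)} := by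
    rw [hsh.1, show Finset.range 6 = {0, 1, 2, 3, 4, 5} from rfl]
    simp only [Finset.image_insert, Finset.image_singleton, zigT0, zigT1, zigT2, zigT3,
      zigT4, zigT5]
  have h13 : f 1 ≠ f 3 := by
    intro h
    have := inj 1 (by norm_num) 2 (by norm_num) (by rw [zigT1, zigT2, h])
    omega
  have h35 : f 3 ≠ f 5 := by
    intro h
    have := inj 3 (by norm_num) 4 (by norm_num) (by rw [zigT3, zigT4, h])
    omega
  have h02 : f 0 ≠ f 2 := by
    intro h
    have := inj 0 (by norm_num) 1 (by norm_num) (by rw [zigT0, zigT1, h])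
    omega
  have h24 : f 2 ≠ f 4 := by
    intro h
    have := inj 2 (by norm_num) 3 (by norm_num) (by rw [zigT2, zigT3, h])
    omega
  have h46 : f 4 ≠ f 6 := by
    intro h
    have := inj 4 (by norm_num) 5 (by norm_num) (by rw [zigT4, zigT5, h])
    omega
  -- membership of the six edges in E
  have m1 : (f 0, f 1) ∈ E := hZE (by rw [hset]; simp)
  have m2 : (f 2, f 1) ∈ E := hZE (by rw [hset]; simp)
  have m3 : (f 2, f 3) ∈ E := hZE (by rw [hset]; simp)
  have m4 : (f 4, f 3) ∈ E := hZE (by rw [hset]; simp)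
  have m5 : (f 4, f 5) ∈ E := hZE (by rw [hset]; simp)
  have m6 : (f 6, f 5) ∈ E := hZE (by rw [hset]; simp)
  have e05ne : (f 0, f 1) ≠ (f 4, f 5) := by
    intro h'
    have := inj 0 (by norm_num) 4 (by norm_num) (by rw [zigT0, zigT4]; exact h')
    omega
  have e16ne : (f 2, f 1) ≠ (f 6, f 5) := by
    intro h'
    have := inj 1 (by norm_num) 5 (by norm_num) (by rw [zigT1, zigT5]; exact h')
    omega
  have e24ne : (f 2, f 1) ≠ (f 4, f 5) := by
    intro h'
    have := inj 1 (by norm_num) 4 (by norm_num) (by rw [zigT1, zigT4]; exact h')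
    omega
  have e14ne : (f 0, f 1) ≠ (f 4, f 3) := by
    intro h'
    have := inj 0 (by norm_num) 3 (by norm_num) (by rw [zigT0, zigT3]; exact h')
    omega
  have e36ne : (f 2, f 3) ≠ (f 6, f 5) := by
    intro h'
    have := inj 2 (by norm_num) 5 (by norm_num) (by rw [zigT2, zigT5]; exact h')
    omega
  have h15 : f 1 ≠ f 5 := by
    intro h
    have hsub : ({(f 0, f 1), (f 2, f 1), (f 4, f 5)} : Finset (V × V)) ⊆
        E.filter (fun e => e.2 = f 1) := by
      intro x hx
      simp only [Finset.mem_insert, Finset.mem_singleton] at hx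
      rcases hx with rfl | rfl | rfl
      · exact Finset.mem_filter.2 ⟨m1, rfl⟩
      · exact Finset.mem_filter.2 ⟨m2, rfl⟩
      · exact Finset.mem_filter.2 ⟨m5, h.symm⟩
    have hc : 3 ≤ indeg E (f 1) := by
      rw [indeg, ← card3_eq (ne_of_fst h02) e05ne e24ne]
      exact Finset.card_le_card hsub
    have := indeg_le_two hN (f 1)
    omega
  have h04 : f 0 ≠ f 4 := by
    intro h
    have hsub : ({(f 0, f 1), (f 4, f 3), (f 4, f 5)} : Finset (V × V)) ⊆
        E.filter (fun e => e.1 = f 0) := by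
      intro x hx
      simp only [Finset.mem_insert, Finset.mem_singleton] at hx
      rcases hx with rfl | rfl | rfl
      · exact Finset.mem_filter.2 ⟨m1, rfl⟩
      · exact Finset.mem_filter.2 ⟨m4, h.symm⟩
      · exact Finset.mem_filter.2 ⟨m5, h.symm⟩
    have hc : 3 ≤ outdeg E (f 0) := by
      rw [outdeg, ← card3_eq e14ne e05ne (ne_of_snd h35)]
      exact Finset.card_le_card hsub
    have := outdeg_le_two hN (f 0)
    omega
  have h26 : f 2 ≠ f 6 := by
    intro h
    have hsub : ({(f 2, f 1), (f 2, f 3), (f 6, f 5)} : Finset (V × V)) ⊆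
        E.filter (fun e => e.1 = f 2) := by
      intro x hx
      simp only [Finset.mem_insert, Finset.mem_singleton] at hx
      rcases hx with rfl | rfl | rfl
      · exact Finset.mem_filter.2 ⟨m2, rfl⟩
      · exact Finset.mem_filter.2 ⟨m3, rfl⟩
      · exact Finset.mem_filter.2 ⟨m6, h.symm⟩
    have hc : 3 ≤ outdeg E (f 2) := by
      rw [outdeg, ← card3_eq (ne_of_snd h13) e16ne e36ne]
      exact Finset.card_le_card hsub
    have := outdeg_le_two hN (f 2)
    omega
  exact ⟨f, hmax, hset, h13, h35, h15, h02, h24, h46, h04, h26, Ne.symm hne⟩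

end Trails
section Stars

variable {E S Z : Finset (V × V)} {p : ℕ} {X : Finset V} {f : ℕ → V}

lemma exists_max_trail {e : V × V} (he : e ∈ E) :
    ∃ Z, e ∈ Z ∧ IsMaximalZigzagTrail E Z := by
  classical
  let T := E.powerset.filter (fun S => IsZigzagTrail E S ∧ e ∈ S)
  have hTne : T.Nonempty := by
    refine ⟨{e}, Finset.mem_filter.2 ⟨Finset.mem_powerset.2 (Finset.singleton_subset_iff.2 he),
      ⟨Finset.singleton_subset_iff.2 he, [e], by simp, by simp, by simp, by simp [List.Chain']⟩,
      Finset.mem_singleton_self e⟩⟩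
  obtain ⟨Z, hZT, hmaxcard⟩ := T.exists_max_image Finset.card hTne
  rw [Finset.mem_filter] at hZT
  refine ⟨Z, hZT.2.2, hZT.2.1, ?_⟩
  intro S' hS' hss
  have hS'T : S' ∈ T := Finset.mem_filter.2
    ⟨Finset.mem_powerset.2 hS'.1, hS', hss.1 hZT.2.2⟩
  have := hmaxcard S' hS'T
  have := Finset.card_lt_card hss
  omega

lemma M_extra (d : MData E Z f) {g : V × V} (hg : g ∈ E)
    (l : List (V × V))
    (hperm : l.toFinset = insert g {(f 1, f 0), (f 1, f 2), (f 3, f 2), (f 3, f 4)})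
    (hlne : l ≠ []) (hnd : l.Nodup) (hch : l.Chain' Shares)
    (hgZ : g ∉ Z) : False := by
  refine max_no_extra d.hmax l hlne hnd hch ?_ ?_ g ?_ hgZ
  · intro x hx
    rw [hperm] at hx
    rcases Finset.mem_insert.1 hx with rfl | hx
    · exact hg
    · exact d.hmax.1.1 (d.hset ▸ hx)
  · rw [hperm, d.hset]
    exact Finset.subset_insert _ _
  · rw [← List.mem_toFinset, hperm]
    exact Finset.mem_insert_self _ _

lemma W_extra (d : WData E Z f) {g : V × V} (hg : g ∈ E)
    (l : List (V × V))
    (hperm : l.toFinset =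
      insert g {(f 0, f 1), (f 2, f 1), (f 2, f 3), (f 4, f 3), (f 4, f 5), (f 6, f 5)})
    (hlne : l ≠ []) (hnd : l.Nodup) (hch : l.Chain' Shares)
    (hgZ : g ∉ Z) : False := by
  refine max_no_extra d.hmax l hlne hnd hch ?_ ?_ g ?_ hgZ
  · intro x hx
    rw [hperm] at hx
    rcases Finset.mem_insert.1 hx with rfl | hx
    · exact hg
    · exact d.hmax.1.1 (d.hset ▸ hx)
  · rw [hperm, d.hset]
    exact Finset.subset_insert _ _
  · rw [← List.mem_toFinset, hperm]
    exact Finset.mem_insert_self _ _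

lemma M_in0 (d : MData E Z f) : ∀ g ∈ E, g.2 = f 0 → g = (f 1, f 0) := by
  intro g hg h2
  by_contra hc
  have n12 : ((f 1, f 0) : V × V) ≠ (f 1, f 2) := ne_of_snd d.h02
  have n13 : ((f 1, f 0) : V × V) ≠ (f 3, f 2) := ne_of_fst d.h13
  have n14 : ((f 1, f 0) : V × V) ≠ (f 3, f 4) := ne_of_fst d.h13
  have n23 : ((f 1, f 2) : V × V) ≠ (f 3, f 2) := ne_of_fst d.h13
  have n24 : ((f 1, f 2) : V × V) ≠ (f 3, f 4) := ne_of_fst d.h13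
  have n34 : ((f 3, f 2) : V × V) ≠ (f 3, f 4) := ne_of_snd d.h24
  have hg2 : g ≠ (f 1, f 2) := by intro h'; rw [h'] at h2; exact d.h02 h2.symm
  have hg3 : g ≠ (f 3, f 2) := by intro h'; rw [h'] at h2; exact d.h02 h2.symm
  have hg4 : g ≠ (f 3, f 4) := by intro h'; rw [h'] at h2; exact d.h04 h2.symm
  refine M_extra d hg [g, (f 1, f 0), (f 1, f 2), (f 3, f 2), (f 3, f 4)]
    (by ext x; simp; try tauto) (by simp) ?_ (by simp [Shares, h2, List.Chain']) ?_
  · simp [hc, hg2, hg3, hg4, n12, n13, n14, n23, n24, n34]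
  · rw [d.hset]; simp [hc, hg2, hg3, hg4]

lemma M_in2 (d : MData E Z f) : ∀ g ∈ E, g.2 = f 2 → g = (f 1, f 2) ∨ g = (f 3, f 2) := by
  intro g hg h2
  by_contra hc
  push_neg at hc
  obtain ⟨hc1, hc2⟩ := hc
  have n12 : ((f 1, f 0) : V × V) ≠ (f 1, f 2) := ne_of_snd d.h02
  have n13 : ((f 1, f 0) : V × V) ≠ (f 3, f 2) := ne_of_fst d.h13
  have n14 : ((f 1, f 0) : V × V) ≠ (f 3, f 4) := ne_of_fst d.h13
  have n23 : ((f 1, f 2) : V × V) ≠ (f 3, f 2) := ne_of_fst d.h13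
  have n24 : ((f 1, f 2) : V × V) ≠ (f 3, f 4) := ne_of_fst d.h13
  have n34 : ((f 3, f 2) : V × V) ≠ (f 3, f 4) := ne_of_snd d.h24
  have hg1 : g ≠ (f 1, f 0) := by intro h'; rw [h'] at h2; exact d.h02 h2
  have hg4 : g ≠ (f 3, f 4) := by intro h'; rw [h'] at h2; exact d.h24 h2.symm
  refine M_extra d hg [(f 1, f 0), (f 1, f 2), g, (f 3, f 2), (f 3, f 4)]
    (by ext x; simp; try tauto) (by simp) ?_ (by simp [Shares, h2, List.Chain']) ?_
  · simp [hg1, hc1, hc2, hg4, n12, n13, n14, n23, n24, n34,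
      Ne.symm hc1, Ne.symm hc2, Ne.symm hg1, Ne.symm hg4]
  · rw [d.hset]; simp [hg1, hc1, hc2, hg4]

lemma M_out1 (d : MData E Z f) : ∀ g ∈ E, g.1 = f 1 → g = (f 1, f 0) ∨ g = (f 1, f 2) := by
  intro g hg h1
  by_contra hc
  push_neg at hc
  obtain ⟨hc1, hc2⟩ := hc
  have n12 : ((f 1, f 0) : V × V) ≠ (f 1, f 2) := ne_of_snd d.h02
  have n13 : ((f 1, f 0) : V × V) ≠ (f 3, f 2) := ne_of_fst d.h13
  have n14 : ((f 1, f 0) : V × V) ≠ (f 3, f 4) := ne_of_fst d.h13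
  have n23 : ((f 1, f 2) : V × V) ≠ (f 3, f 2) := ne_of_fst d.h13
  have n24 : ((f 1, f 2) : V × V) ≠ (f 3, f 4) := ne_of_fst d.h13
  have n34 : ((f 3, f 2) : V × V) ≠ (f 3, f 4) := ne_of_snd d.h24
  have hg3 : g ≠ (f 3, f 2) := by intro h'; rw [h'] at h1; exact d.h13 h1.symm
  have hg4 : g ≠ (f 3, f 4) := by intro h'; rw [h'] at h1; exact d.h13 h1.symm
  refine M_extra d hg [(f 1, f 0), g, (f 1, f 2), (f 3, f 2), (f 3, f 4)]
    (by ext x; simp; try tauto) (by simp) ?_ (by simp [Shares, h1, List.Chain']) ?_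
  · simp [hc1, hc2, hg3, hg4, n12, n13, n14, n23, n24, n34,
      Ne.symm hc1, Ne.symm hc2, Ne.symm hg3, Ne.symm hg4]
  · rw [d.hset]; simp [hc1, hc2, hg3, hg4]

lemma M_in4 (d : MData E Z f) : ∀ g ∈ E, g.2 = f 4 → g = (f 3, f 4) := by
  intro g hg h2
  by_contra hc
  have n12 : ((f 1, f 0) : V × V) ≠ (f 1, f 2) := ne_of_snd d.h02
  have n13 : ((f 1, f 0) : V × V) ≠ (f 3, f 2) := ne_of_fst d.h13
  have n14 : ((f 1, f 0) : V × V) ≠ (f 3, f 4) := ne_of_fst d.h13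
  have n23 : ((f 1, f 2) : V × V) ≠ (f 3, f 2) := ne_of_fst d.h13
  have n24 : ((f 1, f 2) : V × V) ≠ (f 3, f 4) := ne_of_fst d.h13
  have n34 : ((f 3, f 2) : V × V) ≠ (f 3, f 4) := ne_of_snd d.h24
  have hg1 : g ≠ (f 1, f 0) := by intro h'; rw [h'] at h2; exact d.h04 h2
  have hg2 : g ≠ (f 1, f 2) := by intro h'; rw [h'] at h2; exact d.h24 h2
  have hg3 : g ≠ (f 3, f 2) := by intro h'; rw [h'] at h2; exact d.h24 h2
  refine M_extra d hg [(f 1, f 0), (f 1, f 2), (f 3, f 2), (f 3, f 4), g]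
    (by ext x; simp; try tauto) (by simp) ?_ (by simp [Shares, h2, List.Chain']) ?_
  · simp [hg1, hg2, hg3, hc, n12, n13, n14, n23, n24, n34,
      Ne.symm hc, Ne.symm hg1, Ne.symm hg2, Ne.symm hg3]
  · rw [d.hset]; simp [hg1, hg2, hg3, hc]

lemma M_out3 (d : MData E Z f) : ∀ g ∈ E, g.1 = f 3 → g = (f 3, f 2) ∨ g = (f 3, f 4) := by
  intro g hg h1
  by_contra hc
  push_neg at hc
  obtain ⟨hc1, hc2⟩ := hc
  have n12 : ((f 1, f 0) : V × V) ≠ (f 1, f 2) := ne_of_snd d.h02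
  have n13 : ((f 1, f 0) : V × V) ≠ (f 3, f 2) := ne_of_fst d.h13
  have n14 : ((f 1, f 0) : V × V) ≠ (f 3, f 4) := ne_of_fst d.h13
  have n23 : ((f 1, f 2) : V × V) ≠ (f 3, f 2) := ne_of_fst d.h13
  have n24 : ((f 1, f 2) : V × V) ≠ (f 3, f 4) := ne_of_fst d.h13
  have n34 : ((f 3, f 2) : V × V) ≠ (f 3, f 4) := ne_of_snd d.h24
  have hg1 : g ≠ (f 1, f 0) := by intro h'; rw [h'] at h1; exact d.h13 h1
  have hg2 : g ≠ (f 1, f 2) := by intro h'; rw [h'] at h1; exact d.h13 h1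
  refine M_extra d hg [(f 1, f 0), (f 1, f 2), (f 3, f 2), g, (f 3, f 4)]
    (by ext x; simp; try tauto) (by simp) ?_ (by simp [Shares, h1, List.Chain']) ?_
  · simp [hg1, hg2, hc1, hc2, n12, n13, n14, n23, n24, n34,
      Ne.symm hc1, Ne.symm hc2, Ne.symm hg1, Ne.symm hg2]
  · rw [d.hset]; simp [hg1, hg2, hc1, hc2]

end Stars
section WStars

variable {E S Z : Finset (V × V)} {p : ℕ} {X : Finset V} {f : ℕ → V}

lemma W_out0 (d : WData E Z f) : ∀ g ∈ E, g.1 = f 0 → g = (f 0, f 1) := by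
  intro g hg h1
  by_contra hc
  have n12 : ((f 0, f 1) : V × V) ≠ (f 2, f 1) := ne_of_fst d.h02
  have n13 : ((f 0, f 1) : V × V) ≠ (f 2, f 3) := ne_of_fst d.h02
  have n14 : ((f 0, f 1) : V × V) ≠ (f 4, f 3) := ne_of_fst d.h04
  have n15 : ((f 0, f 1) : V × V) ≠ (f 4, f 5) := ne_of_fst d.h04
  have n16 : ((f 0, f 1) : V × V) ≠ (f 6, f 5) := ne_of_fst d.h06
  have n23 : ((f 2, f 1) : V × V) ≠ (f 2, f 3) := ne_of_snd d.h13
  have n24 : ((f 2, f 1) : V × V) ≠ (f 4, f 3) := ne_of_fst d.h24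
  have n25 : ((f 2, f 1) : V × V) ≠ (f 4, f 5) := ne_of_fst d.h24
  have n26 : ((f 2, f 1) : V × V) ≠ (f 6, f 5) := ne_of_fst d.h26
  have n34 : ((f 2, f 3) : V × V) ≠ (f 4, f 3) := ne_of_fst d.h24
  have n35 : ((f 2, f 3) : V × V) ≠ (f 4, f 5) := ne_of_fst d.h24
  have n36 : ((f 2, f 3) : V × V) ≠ (f 6, f 5) := ne_of_fst d.h26
  have n45 : ((f 4, f 3) : V × V) ≠ (f 4, f 5) := ne_of_snd d.h35
  have n46 : ((f 4, f 3) : V × V) ≠ (f 6, f 5) := ne_of_fst d.h46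
  have n56 : ((f 4, f 5) : V × V) ≠ (f 6, f 5) := ne_of_fst d.h46
  have hg2 : g ≠ (f 2, f 1) := by intro h'; rw [h'] at h1; exact d.h02 h1.symm
  have hg3 : g ≠ (f 2, f 3) := by intro h'; rw [h'] at h1; exact d.h02 h1.symm
  have hg4 : g ≠ (f 4, f 3) := by intro h'; rw [h'] at h1; exact d.h04 h1.symm
  have hg5 : g ≠ (f 4, f 5) := by intro h'; rw [h'] at h1; exact d.h04 h1.symm
  have hg6 : g ≠ (f 6, f 5) := by intro h'; rw [h'] at h1; exact d.h06 h1.symm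
  refine W_extra d hg [g, (f 0, f 1), (f 2, f 1), (f 2, f 3), (f 4, f 3), (f 4, f 5), (f 6, f 5)]
    (by ext x; simp; try tauto) (by simp) ?_ (by simp [Shares, h1, List.Chain']) ?_
  · simp [n12, n13, n14, n15, n16, n23, n24, n25, n26, n34, n35, n36, n45, n46, n56, hc, hg2, hg3, hg4, hg5, hg6, Ne.symm hc, Ne.symm hg2, Ne.symm hg3, Ne.symm hg4, Ne.symm hg5, Ne.symm hg6]
  · rw [d.hset]; simp [hc, hg2, hg3, hg4, hg5, hg6]

lemma W_in1 (d : WData E Z f) : ∀ g ∈ E, g.2 = f 1 → g = (f 0, f 1) ∨ g = (f 2, f 1) := by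
  intro g hg h2
  by_contra hc
  push_neg at hc
  obtain ⟨hc1, hc2⟩ := hc
  have n12 : ((f 0, f 1) : V × V) ≠ (f 2, f 1) := ne_of_fst d.h02
  have n13 : ((f 0, f 1) : V × V) ≠ (f 2, f 3) := ne_of_fst d.h02
  have n14 : ((f 0, f 1) : V × V) ≠ (f 4, f 3) := ne_of_fst d.h04
  have n15 : ((f 0, f 1) : V × V) ≠ (f 4, f 5) := ne_of_fst d.h04
  have n16 : ((f 0, f 1) : V × V) ≠ (f 6, f 5) := ne_of_fst d.h06
  have n23 : ((f 2, f 1) : V × V) ≠ (f 2, f 3) := ne_of_snd d.h13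
  have n24 : ((f 2, f 1) : V × V) ≠ (f 4, f 3) := ne_of_fst d.h24
  have n25 : ((f 2, f 1) : V × V) ≠ (f 4, f 5) := ne_of_fst d.h24
  have n26 : ((f 2, f 1) : V × V) ≠ (f 6, f 5) := ne_of_fst d.h26
  have n34 : ((f 2, f 3) : V × V) ≠ (f 4, f 3) := ne_of_fst d.h24
  have n35 : ((f 2, f 3) : V × V) ≠ (f 4, f 5) := ne_of_fst d.h24
  have n36 : ((f 2, f 3) : V × V) ≠ (f 6, f 5) := ne_of_fst d.h26
  have n45 : ((f 4, f 3) : V × V) ≠ (f 4, f 5) := ne_of_snd d.h35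
  have n46 : ((f 4, f 3) : V × V) ≠ (f 6, f 5) := ne_of_fst d.h46
  have n56 : ((f 4, f 5) : V × V) ≠ (f 6, f 5) := ne_of_fst d.h46
  have hg3 : g ≠ (f 2, f 3) := by intro h'; rw [h'] at h2; exact d.h13 h2.symm
  have hg4 : g ≠ (f 4, f 3) := by intro h'; rw [h'] at h2; exact d.h13 h2.symm
  have hg5 : g ≠ (f 4, f 5) := by intro h'; rw [h'] at h2; exact d.h15 h2.symm
  have hg6 : g ≠ (f 6, f 5) := by intro h'; rw [h'] at h2; exact d.h15 h2.symm
  refine W_extra d hg [(f 0, f 1), g, (f 2, f 1), (f 2, f 3), (f 4, f 3), (f 4, f 5), (f 6, f 5)]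
    (by ext x; simp; try tauto) (by simp) ?_ (by simp [Shares, h2, List.Chain']) ?_
  · simp [n12, n13, n14, n15, n16, n23, n24, n25, n26, n34, n35, n36, n45, n46, n56, hc1, hc2, hg3, hg4, hg5, hg6, Ne.symm hc1, Ne.symm hc2, Ne.symm hg3, Ne.symm hg4, Ne.symm hg5, Ne.symm hg6]
  · rw [d.hset]; simp [hc1, hc2, hg3, hg4, hg5, hg6]

lemma W_out2 (d : WData E Z f) : ∀ g ∈ E, g.1 = f 2 → g = (f 2, f 1) ∨ g = (f 2, f 3) := by
  intro g hg h1
  by_contra hc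
  push_neg at hc
  obtain ⟨hc1, hc2⟩ := hc
  have n12 : ((f 0, f 1) : V × V) ≠ (f 2, f 1) := ne_of_fst d.h02
  have n13 : ((f 0, f 1) : V × V) ≠ (f 2, f 3) := ne_of_fst d.h02
  have n14 : ((f 0, f 1) : V × V) ≠ (f 4, f 3) := ne_of_fst d.h04
  have n15 : ((f 0, f 1) : V × V) ≠ (f 4, f 5) := ne_of_fst d.h04
  have n16 : ((f 0, f 1) : V × V) ≠ (f 6, f 5) := ne_of_fst d.h06
  have n23 : ((f 2, f 1) : V × V) ≠ (f 2, f 3) := ne_of_snd d.h13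
  have n24 : ((f 2, f 1) : V × V) ≠ (f 4, f 3) := ne_of_fst d.h24
  have n25 : ((f 2, f 1) : V × V) ≠ (f 4, f 5) := ne_of_fst d.h24
  have n26 : ((f 2, f 1) : V × V) ≠ (f 6, f 5) := ne_of_fst d.h26
  have n34 : ((f 2, f 3) : V × V) ≠ (f 4, f 3) := ne_of_fst d.h24
  have n35 : ((f 2, f 3) : V × V) ≠ (f 4, f 5) := ne_of_fst d.h24
  have n36 : ((f 2, f 3) : V × V) ≠ (f 6, f 5) := ne_of_fst d.h26
  have n45 : ((f 4, f 3) : V × V) ≠ (f 4, f 5) := ne_of_snd d.h35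
  have n46 : ((f 4, f 3) : V × V) ≠ (f 6, f 5) := ne_of_fst d.h46
  have n56 : ((f 4, f 5) : V × V) ≠ (f 6, f 5) := ne_of_fst d.h46
  have hg1 : g ≠ (f 0, f 1) := by intro h'; rw [h'] at h1; exact d.h02 h1
  have hg4 : g ≠ (f 4, f 3) := by intro h'; rw [h'] at h1; exact d.h24 h1.symm
  have hg5 : g ≠ (f 4, f 5) := by intro h'; rw [h'] at h1; exact d.h24 h1.symm
  have hg6 : g ≠ (f 6, f 5) := by intro h'; rw [h'] at h1; exact d.h26 h1.symm
  refine W_extra d hg [(f 0, f 1), (f 2, f 1), g, (f 2, f 3), (f 4, f 3), (f 4, f 5), (f 6, f 5)]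
    (by ext x; simp; try tauto) (by simp) ?_ (by simp [Shares, h1, List.Chain']) ?_
  · simp [n12, n13, n14, n15, n16, n23, n24, n25, n26, n34, n35, n36, n45, n46, n56, hg1, hc1, hc2, hg4, hg5, hg6, Ne.symm hg1, Ne.symm hc1, Ne.symm hc2, Ne.symm hg4, Ne.symm hg5, Ne.symm hg6]
  · rw [d.hset]; simp [hg1, hc1, hc2, hg4, hg5, hg6]

lemma W_in3 (d : WData E Z f) : ∀ g ∈ E, g.2 = f 3 → g = (f 2, f 3) ∨ g = (f 4, f 3) := by
  intro g hg h2
  by_contra hc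
  push_neg at hc
  obtain ⟨hc1, hc2⟩ := hc
  have n12 : ((f 0, f 1) : V × V) ≠ (f 2, f 1) := ne_of_fst d.h02
  have n13 : ((f 0, f 1) : V × V) ≠ (f 2, f 3) := ne_of_fst d.h02
  have n14 : ((f 0, f 1) : V × V) ≠ (f 4, f 3) := ne_of_fst d.h04
  have n15 : ((f 0, f 1) : V × V) ≠ (f 4, f 5) := ne_of_fst d.h04
  have n16 : ((f 0, f 1) : V × V) ≠ (f 6, f 5) := ne_of_fst d.h06
  have n23 : ((f 2, f 1) : V × V) ≠ (f 2, f 3) := ne_of_snd d.h13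
  have n24 : ((f 2, f 1) : V × V) ≠ (f 4, f 3) := ne_of_fst d.h24
  have n25 : ((f 2, f 1) : V × V) ≠ (f 4, f 5) := ne_of_fst d.h24
  have n26 : ((f 2, f 1) : V × V) ≠ (f 6, f 5) := ne_of_fst d.h26
  have n34 : ((f 2, f 3) : V × V) ≠ (f 4, f 3) := ne_of_fst d.h24
  have n35 : ((f 2, f 3) : V × V) ≠ (f 4, f 5) := ne_of_fst d.h24
  have n36 : ((f 2, f 3) : V × V) ≠ (f 6, f 5) := ne_of_fst d.h26
  have n45 : ((f 4, f 3) : V × V) ≠ (f 4, f 5) := ne_of_snd d.h35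
  have n46 : ((f 4, f 3) : V × V) ≠ (f 6, f 5) := ne_of_fst d.h46
  have n56 : ((f 4, f 5) : V × V) ≠ (f 6, f 5) := ne_of_fst d.h46
  have hg1 : g ≠ (f 0, f 1) := by intro h'; rw [h'] at h2; exact d.h13 h2
  have hg2 : g ≠ (f 2, f 1) := by intro h'; rw [h'] at h2; exact d.h13 h2
  have hg5 : g ≠ (f 4, f 5) := by intro h'; rw [h'] at h2; exact d.h35 h2.symm
  have hg6 : g ≠ (f 6, f 5) := by intro h'; rw [h'] at h2; exact d.h35 h2.symm
  refine W_extra d hg [(f 0, f 1), (f 2, f 1), (f 2, f 3), g, (f 4, f 3), (f 4, f 5), (f 6, f 5)]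
    (by ext x; simp; try tauto) (by simp) ?_ (by simp [Shares, h2, List.Chain']) ?_
  · simp [n12, n13, n14, n15, n16, n23, n24, n25, n26, n34, n35, n36, n45, n46, n56, hg1, hg2, hc1, hc2, hg5, hg6, Ne.symm hg1, Ne.symm hg2, Ne.symm hc1, Ne.symm hc2, Ne.symm hg5, Ne.symm hg6]
  · rw [d.hset]; simp [hg1, hg2, hc1, hc2, hg5, hg6]

lemma W_out4 (d : WData E Z f) : ∀ g ∈ E, g.1 = f 4 → g = (f 4, f 3) ∨ g = (f 4, f 5) := by
  intro g hg h1
  by_contra hc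
  push_neg at hc
  obtain ⟨hc1, hc2⟩ := hc
  have n12 : ((f 0, f 1) : V × V) ≠ (f 2, f 1) := ne_of_fst d.h02
  have n13 : ((f 0, f 1) : V × V) ≠ (f 2, f 3) := ne_of_fst d.h02
  have n14 : ((f 0, f 1) : V × V) ≠ (f 4, f 3) := ne_of_fst d.h04
  have n15 : ((f 0, f 1) : V × V) ≠ (f 4, f 5) := ne_of_fst d.h04
  have n16 : ((f 0, f 1) : V × V) ≠ (f 6, f 5) := ne_of_fst d.h06
  have n23 : ((f 2, f 1) : V × V) ≠ (f 2, f 3) := ne_of_snd d.h13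
  have n24 : ((f 2, f 1) : V × V) ≠ (f 4, f 3) := ne_of_fst d.h24
  have n25 : ((f 2, f 1) : V × V) ≠ (f 4, f 5) := ne_of_fst d.h24
  have n26 : ((f 2, f 1) : V × V) ≠ (f 6, f 5) := ne_of_fst d.h26
  have n34 : ((f 2, f 3) : V × V) ≠ (f 4, f 3) := ne_of_fst d.h24
  have n35 : ((f 2, f 3) : V × V) ≠ (f 4, f 5) := ne_of_fst d.h24
  have n36 : ((f 2, f 3) : V × V) ≠ (f 6, f 5) := ne_of_fst d.h26
  have n45 : ((f 4, f 3) : V × V) ≠ (f 4, f 5) := ne_of_snd d.h35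
  have n46 : ((f 4, f 3) : V × V) ≠ (f 6, f 5) := ne_of_fst d.h46
  have n56 : ((f 4, f 5) : V × V) ≠ (f 6, f 5) := ne_of_fst d.h46
  have hg1 : g ≠ (f 0, f 1) := by intro h'; rw [h'] at h1; exact d.h04 h1
  have hg2 : g ≠ (f 2, f 1) := by intro h'; rw [h'] at h1; exact d.h24 h1
  have hg3 : g ≠ (f 2, f 3) := by intro h'; rw [h'] at h1; exact d.h24 h1
  have hg6 : g ≠ (f 6, f 5) := by intro h'; rw [h'] at h1; exact d.h46 h1.symm
  refine W_extra d hg [(f 0, f 1), (f 2, f 1), (f 2, f 3), (f 4, f 3), g, (f 4, f 5), (f 6, f 5)]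
    (by ext x; simp; try tauto) (by simp) ?_ (by simp [Shares, h1, List.Chain']) ?_
  · simp [n12, n13, n14, n15, n16, n23, n24, n25, n26, n34, n35, n36, n45, n46, n56, hg1, hg2, hg3, hc1, hc2, hg6, Ne.symm hg1, Ne.symm hg2, Ne.symm hg3, Ne.symm hc1, Ne.symm hc2, Ne.symm hg6]
  · rw [d.hset]; simp [hg1, hg2, hg3, hc1, hc2, hg6]

lemma W_in5 (d : WData E Z f) : ∀ g ∈ E, g.2 = f 5 → g = (f 4, f 5) ∨ g = (f 6, f 5) := by
  intro g hg h2
  by_contra hc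
  push_neg at hc
  obtain ⟨hc1, hc2⟩ := hc
  have n12 : ((f 0, f 1) : V × V) ≠ (f 2, f 1) := ne_of_fst d.h02
  have n13 : ((f 0, f 1) : V × V) ≠ (f 2, f 3) := ne_of_fst d.h02
  have n14 : ((f 0, f 1) : V × V) ≠ (f 4, f 3) := ne_of_fst d.h04
  have n15 : ((f 0, f 1) : V × V) ≠ (f 4, f 5) := ne_of_fst d.h04
  have n16 : ((f 0, f 1) : V × V) ≠ (f 6, f 5) := ne_of_fst d.h06
  have n23 : ((f 2, f 1) : V × V) ≠ (f 2, f 3) := ne_of_snd d.h13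
  have n24 : ((f 2, f 1) : V × V) ≠ (f 4, f 3) := ne_of_fst d.h24
  have n25 : ((f 2, f 1) : V × V) ≠ (f 4, f 5) := ne_of_fst d.h24
  have n26 : ((f 2, f 1) : V × V) ≠ (f 6, f 5) := ne_of_fst d.h26
  have n34 : ((f 2, f 3) : V × V) ≠ (f 4, f 3) := ne_of_fst d.h24
  have n35 : ((f 2, f 3) : V × V) ≠ (f 4, f 5) := ne_of_fst d.h24
  have n36 : ((f 2, f 3) : V × V) ≠ (f 6, f 5) := ne_of_fst d.h26
  have n45 : ((f 4, f 3) : V × V) ≠ (f 4, f 5) := ne_of_snd d.h35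
  have n46 : ((f 4, f 3) : V × V) ≠ (f 6, f 5) := ne_of_fst d.h46
  have n56 : ((f 4, f 5) : V × V) ≠ (f 6, f 5) := ne_of_fst d.h46
  have hg1 : g ≠ (f 0, f 1) := by intro h'; rw [h'] at h2; exact d.h15 h2
  have hg2 : g ≠ (f 2, f 1) := by intro h'; rw [h'] at h2; exact d.h15 h2
  have hg3 : g ≠ (f 2, f 3) := by intro h'; rw [h'] at h2; exact d.h35 h2
  have hg4 : g ≠ (f 4, f 3) := by intro h'; rw [h'] at h2; exact d.h35 h2
  refine W_extra d hg [(f 0, f 1), (f 2, f 1), (f 2, f 3), (f 4, f 3), (f 4, f 5), g, (f 6, f 5)]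
    (by ext x; simp; try tauto) (by simp) ?_ (by simp [Shares, h2, List.Chain']) ?_
  · simp [n12, n13, n14, n15, n16, n23, n24, n25, n26, n34, n35, n36, n45, n46, n56, hg1, hg2, hg3, hg4, hc1, hc2, Ne.symm hg1, Ne.symm hg2, Ne.symm hg3, Ne.symm hg4, Ne.symm hc1, Ne.symm hc2]
  · rw [d.hset]; simp [hg1, hg2, hg3, hg4, hc1, hc2]

lemma W_out6 (d : WData E Z f) : ∀ g ∈ E, g.1 = f 6 → g = (f 6, f 5) := by
  intro g hg h1
  by_contra hc
  have n12 : ((f 0, f 1) : V × V) ≠ (f 2, f 1) := ne_of_fst d.h02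
  have n13 : ((f 0, f 1) : V × V) ≠ (f 2, f 3) := ne_of_fst d.h02
  have n14 : ((f 0, f 1) : V × V) ≠ (f 4, f 3) := ne_of_fst d.h04
  have n15 : ((f 0, f 1) : V × V) ≠ (f 4, f 5) := ne_of_fst d.h04
  have n16 : ((f 0, f 1) : V × V) ≠ (f 6, f 5) := ne_of_fst d.h06
  have n23 : ((f 2, f 1) : V × V) ≠ (f 2, f 3) := ne_of_snd d.h13
  have n24 : ((f 2, f 1) : V × V) ≠ (f 4, f 3) := ne_of_fst d.h24
  have n25 : ((f 2, f 1) : V × V) ≠ (f 4, f 5) := ne_of_fst d.h24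
  have n26 : ((f 2, f 1) : V × V) ≠ (f 6, f 5) := ne_of_fst d.h26
  have n34 : ((f 2, f 3) : V × V) ≠ (f 4, f 3) := ne_of_fst d.h24
  have n35 : ((f 2, f 3) : V × V) ≠ (f 4, f 5) := ne_of_fst d.h24
  have n36 : ((f 2, f 3) : V × V) ≠ (f 6, f 5) := ne_of_fst d.h26
  have n45 : ((f 4, f 3) : V × V) ≠ (f 4, f 5) := ne_of_snd d.h35
  have n46 : ((f 4, f 3) : V × V) ≠ (f 6, f 5) := ne_of_fst d.h46
  have n56 : ((f 4, f 5) : V × V) ≠ (f 6, f 5) := ne_of_fst d.h46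
  have hg1 : g ≠ (f 0, f 1) := by intro h'; rw [h'] at h1; exact d.h06 h1
  have hg2 : g ≠ (f 2, f 1) := by intro h'; rw [h'] at h1; exact d.h26 h1
  have hg3 : g ≠ (f 2, f 3) := by intro h'; rw [h'] at h1; exact d.h26 h1
  have hg4 : g ≠ (f 4, f 3) := by intro h'; rw [h'] at h1; exact d.h46 h1
  have hg5 : g ≠ (f 4, f 5) := by intro h'; rw [h'] at h1; exact d.h46 h1
  refine W_extra d hg [(f 0, f 1), (f 2, f 1), (f 2, f 3), (f 4, f 3), (f 4, f 5), (f 6, f 5), g]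
    (by ext x; simp; try tauto) (by simp) ?_ (by simp [Shares, h1, List.Chain']) ?_
  · simp [n12, n13, n14, n15, n16, n23, n24, n25, n26, n34, n35, n36, n45, n46, n56, hg1, hg2, hg3, hg4, hg5, hc, Ne.symm hg1, Ne.symm hg2, Ne.symm hg3, Ne.symm hg4, Ne.symm hg5, Ne.symm hc]
  · rw [d.hset]; simp [hg1, hg2, hg3, hg4, hg5, hc]

lemma N_star {E Z : Finset (V × V)} {g : V × V} (hmax : IsMaximalZigzagTrail E Z)
    (hZ : Z = {g}) :
    (∀ h ∈ E, h.1 = g.1 → h = g) ∧ (∀ h ∈ E, h.2 = g.2 → h = g) := by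
  constructor
  · intro h hh h1
    by_contra hc
    refine max_no_extra hmax [h, g] (by simp) (by simp [hc]) (by simp [Shares, h1, List.Chain']) ?_ ?_ h
      (by simp) (by rw [hZ]; simp [hc])
    · intro x hx
      simp at hx
      rcases hx with rfl | rfl
      · exact hh
      · exact hmax.1.1 (hZ ▸ Finset.mem_singleton_self _)
    · rw [hZ]
      intro x hx
      simp at hx ⊢
      tauto
  · intro h hh h2
    by_contra hc
    refine max_no_extra hmax [h, g] (by simp) (by simp [hc]) (by simp [Shares, h2, List.Chain']) ?_ ?_ h
      (by simp) (by rw [hZ]; simp [hc])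
    · intro x hx
      simp at hx
      rcases hx with rfl | rfl
      · exact hh
      · exact hmax.1.1 (hZ ▸ Finset.mem_singleton_self _)
    · rw [hZ]
      intro x hx
      simp at hx ⊢
      tauto

end WStars
section Cross

variable {E S Z Z1 Z2 Z3 : Finset (V × V)} {p : ℕ} {X : Finset V} {f a b c : ℕ → V}

lemma pair_eq {x1 x2 y1 y2 : V} (h : (x1, x2) = (y1, y2)) : x1 = y1 ∧ x2 = y2 :=
  ⟨congrArg Prod.fst h, congrArg Prod.snd h⟩

lemma MData.mem1 (d : MData E Z f) : (f 1, f 0) ∈ E := d.hmax.1.1 (d.hset ▸ by simp)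
lemma MData.mem2 (d : MData E Z f) : (f 1, f 2) ∈ E := d.hmax.1.1 (d.hset ▸ by simp)
lemma MData.mem3 (d : MData E Z f) : (f 3, f 2) ∈ E := d.hmax.1.1 (d.hset ▸ by simp)
lemma MData.mem4 (d : MData E Z f) : (f 3, f 4) ∈ E := d.hmax.1.1 (d.hset ▸ by simp)
lemma WData.mem1 (d : WData E Z f) : (f 0, f 1) ∈ E := d.hmax.1.1 (d.hset ▸ by simp)
lemma WData.mem2 (d : WData E Z f) : (f 2, f 1) ∈ E := d.hmax.1.1 (d.hset ▸ by simp)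
lemma WData.mem3 (d : WData E Z f) : (f 2, f 3) ∈ E := d.hmax.1.1 (d.hset ▸ by simp)
lemma WData.mem4 (d : WData E Z f) : (f 4, f 3) ∈ E := d.hmax.1.1 (d.hset ▸ by simp)
lemma WData.mem5 (d : WData E Z f) : (f 4, f 5) ∈ E := d.hmax.1.1 (d.hset ▸ by simp)
lemma WData.mem6 (d : WData E Z f) : (f 6, f 5) ∈ E := d.hmax.1.1 (d.hset ▸ by simp)

lemma M_rev (d : MData E Z f) : MData E Z (fun i => f (4 - i)) := by
  refine ⟨d.hmax, ?_, ?_, ?_, ?_, ?_⟩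
  · show Z = {(f 3, f 4), (f 3, f 2), (f 1, f 2), (f 1, f 0)}
    rw [d.hset]; ext x; simp; tauto
  · exact Ne.symm d.h24
  · exact Ne.symm d.h02
  · exact Ne.symm d.h04
  · exact Ne.symm d.h13

lemma W_rev (d : WData E Z f) : WData E Z (fun i => f (6 - i)) := by
  refine ⟨d.hmax, ?_, ?_, ?_, ?_, ?_, ?_, ?_, ?_, ?_, ?_⟩
  · show Z = {(f 6, f 5), (f 4, f 5), (f 4, f 3), (f 2, f 3), (f 2, f 1), (f 0, f 1)}
    rw [d.hset]; ext x; simp; tauto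
  · exact Ne.symm d.h35
  · exact Ne.symm d.h13
  · exact Ne.symm d.h15
  · exact Ne.symm d.h46
  · exact Ne.symm d.h24
  · exact Ne.symm d.h02
  · exact Ne.symm d.h26
  · exact Ne.symm d.h04
  · exact Ne.symm d.h06

/-- A set cannot be simultaneously a length-4 M-shape and a length-4 W-shape. -/
lemma MW4_absurd {fm fw : ℕ → V} (hm : IsZigzagShape Z 4 fm false) (hne : fm 4 ≠ fm 0)
    (hw : IsZigzagShape Z 4 fw true) : False := by
  have injm := hm.2
  have injw := hw.2
  have setm : Z = {(fm 1, fm 0), (fm 1, fm 2), (fm 3, fm 2), (fm 3, fm 4)} := by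
    rw [hm.1, show Finset.range 4 = {0, 1, 2, 3} from rfl]
    simp only [Finset.image_insert, Finset.image_singleton, zigF0, zigF1, zigF2, zigF3]
  have setw : Z = {(fw 0, fw 1), (fw 2, fw 1), (fw 2, fw 3), (fw 4, fw 3)} := by
    rw [hw.1, show Finset.range 4 = {0, 1, 2, 3} from rfl]
    simp only [Finset.image_insert, Finset.image_singleton, zigT0, zigT1, zigT2, zigT3]
  have h02m : fm 0 ≠ fm 2 := by
    intro h
    have := injm 0 (by norm_num) 1 (by norm_num) (by rw [zigF0, zigF1, h])
    omega
  have h02w : fw 0 ≠ fw 2 := by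
    intro h
    have := injw 0 (by norm_num) 1 (by norm_num) (by rw [zigT0, zigT1, h])
    omega
  have h24w : fw 2 ≠ fw 4 := by
    intro h
    have := injw 2 (by norm_num) 3 (by norm_num) (by rw [zigT2, zigT3, h])
    omega
  -- every edge of Z with head fm 0 equals (fm 1, fm 0)
  have huniq : ∀ e ∈ Z, e.2 = fm 0 → e = (fm 1, fm 0) := by
    intro e he h2
    rw [setm] at he
    simp only [Finset.mem_insert, Finset.mem_singleton] at he
    rcases he with rfl | rfl | rfl | rfl
    · rfl
    · exact absurd h2.symm h02m
    · exact absurd h2.symm h02m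
    · exact absurd h2.symm (Ne.symm hne)
  have hmem : ((fm 1, fm 0) : V × V) ∈ Z := setm ▸ by simp
  rw [setw] at hmem
  simp only [Finset.mem_insert, Finset.mem_singleton] at hmem
  have w1 : ((fw 0, fw 1) : V × V) ∈ Z := setw ▸ by simp
  have w2 : ((fw 2, fw 1) : V × V) ∈ Z := setw ▸ by simp
  have w3 : ((fw 2, fw 3) : V × V) ∈ Z := setw ▸ by simp
  have w4 : ((fw 4, fw 3) : V × V) ∈ Z := setw ▸ by simp
  rcases hmem with h | h | h | h
  · have e1 := huniq _ w1 (congrArg Prod.snd h).symm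
    have e2 := huniq _ w2 (congrArg Prod.snd h).symm
    exact h02w (congrArg Prod.fst (e1.trans e2.symm))
  · have e1 := huniq _ w1 (congrArg Prod.snd h).symm
    have e2 := huniq _ w2 (congrArg Prod.snd h).symm
    exact h02w (congrArg Prod.fst (e1.trans e2.symm))
  · have e1 := huniq _ w3 (congrArg Prod.snd h).symm
    have e2 := huniq _ w4 (congrArg Prod.snd h).symm
    exact h24w (congrArg Prod.fst (e1.trans e2.symm))
  · have e1 := huniq _ w3 (congrArg Prod.snd h).symm
    have e2 := huniq _ w4 (congrArg Prod.snd h).symm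
    exact h24w (congrArg Prod.fst (e1.trans e2.symm))

/-- Core cross-trail distinctness: the middle "up" edge of one M-fence cannot equal the
middle "up" edge of a different M-fence. -/
lemma MM22 (dA : MData E Z1 a) (dB : MData E Z2 b) (hZ : Z1 ≠ Z2) :
    ((a 1, a 2) : V × V) ≠ (b 1, b 2) := by
  intro h
  have ha1 : a 1 = b 1 := (pair_eq h).1
  have ha2 : a 2 = b 2 := (pair_eq h).2
  have h1 := M_in2 dA (b 3, b 2) dB.mem3 (by simp [← ha2])
  have h1' : ((b 3, b 2) : V × V) = (a 3, a 2) := by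
    rcases h1 with h1 | h1
    · rw [h] at h1
      exact absurd (pair_eq h1).1 dB.h13.symm
    · exact h1
  have h2 := M_out1 dA (b 1, b 0) dB.mem1 (by simp [← ha1])
  have h2' : ((b 1, b 0) : V × V) = (a 1, a 0) := by
    rcases h2 with h2 | h2
    · exact h2
    · rw [h] at h2
      exact absurd (pair_eq h2).2 dB.h02
  have ha3 : b 3 = a 3 := (pair_eq h1').1
  have h3 := M_out3 dA (b 3, b 4) dB.mem4 (by simp [ha3])
  have h3' : ((b 3, b 4) : V × V) = (a 3, a 4) := by
    rcases h3 with h3 | h3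
    · rw [← h1'] at h3
      exact absurd (pair_eq h3).2 dB.h24.symm
    · exact h3
  apply hZ
  rw [dA.hset, dB.hset, h1', h2', h3', ← h]

lemma MM23 (dA : MData E Z1 a) (dB : MData E Z2 b) (hZ : Z1 ≠ Z2) :
    ((a 1, a 2) : V × V) ≠ (b 3, b 2) := by
  intro h
  have ha1 : a 1 = b 3 := (pair_eq h).1
  have ha2 : a 2 = b 2 := (pair_eq h).2
  have h1 := M_in2 dA (b 1, b 2) dB.mem2 (by simp [← ha2])
  have h1' : ((b 1, b 2) : V × V) = (a 3, a 2) := by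
    rcases h1 with h1 | h1
    · rw [h] at h1
      exact absurd (pair_eq h1).1 dB.h13
    · exact h1
  have h2 := M_out1 dA (b 3, b 4) dB.mem4 (by simp [← ha1])
  have h2' : ((b 3, b 4) : V × V) = (a 1, a 0) := by
    rcases h2 with h2 | h2
    · exact h2
    · rw [h] at h2
      exact absurd (pair_eq h2).2 dB.h24.symm
  have ha3 : b 1 = a 3 := (pair_eq h1').1
  have h3 := M_out3 dA (b 1, b 0) dB.mem1 (by simp [ha3])
  have h3' : ((b 1, b 0) : V × V) = (a 3, a 4) := by
    rcases h3 with h3 | h3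
    · rw [← h1'] at h3
      exact absurd (pair_eq h3).2 dB.h02
    · exact h3
  apply hZ
  rw [dA.hset, dB.hset, h1', h2', h3', ← h]
  ext x; simp; tauto

lemma MW_A2C2 (dA : MData E Z1 a) (dC : WData E Z3 c) :
    ((a 1, a 2) : V × V) ≠ (c 2, c 1) := by
  intro h
  have ha2 : a 2 = c 1 := (pair_eq h).2
  have h1 := M_in2 dA (c 0, c 1) dC.mem1 (by simp [← ha2])
  have h1' : ((c 0, c 1) : V × V) = (a 3, a 2) := by
    rcases h1 with h1 | h1
    · rw [h] at h1
      exact absurd (pair_eq h1).1 dC.h02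
    · exact h1
  have hc0 : a 3 = c 0 := ((pair_eq h1').1).symm
  have h2 := W_out0 dC (a 3, a 4) dA.mem4 (by simp [hc0])
  rw [h1'] at h2
  exact dA.h24.symm (pair_eq h2).2

lemma MW_A2C3 (dA : MData E Z1 a) (dC : WData E Z3 c) :
    ((a 1, a 2) : V × V) ≠ (c 2, c 3) := by
  intro h
  have ha2 : a 2 = c 3 := (pair_eq h).2
  have h1 := M_in2 dA (c 4, c 3) dC.mem4 (by simp [← ha2])
  have h1' : ((c 4, c 3) : V × V) = (a 3, a 2) := by
    rcases h1 with h1 | h1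
    · rw [h] at h1
      exact absurd (pair_eq h1).1 dC.h24.symm
    · exact h1
  have hc4 : c 4 = a 3 := (pair_eq h1').1
  have h2 := M_out3 dA (c 4, c 5) dC.mem5 (by simp [hc4])
  have h2' : ((c 4, c 5) : V × V) = (a 3, a 4) := by
    rcases h2 with h2 | h2
    · rw [← h1'] at h2
      exact absurd (pair_eq h2).2 dC.h35.symm
    · exact h2
  have hc5 : c 5 = a 4 := (pair_eq h2').2
  have h3 := M_in4 dA (c 6, c 5) dC.mem6 (by simp [hc5])
  rw [← h2'] at h3
  exact dC.h46.symm (pair_eq h3).1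

lemma MW_A2C4 (dA : MData E Z1 a) (dC : WData E Z3 c) :
    ((a 1, a 2) : V × V) ≠ (c 4, c 3) := by
  intro h
  have ha2 : a 2 = c 3 := (pair_eq h).2
  have h1 := M_in2 dA (c 2, c 3) dC.mem3 (by simp [← ha2])
  have h1' : ((c 2, c 3) : V × V) = (a 3, a 2) := by
    rcases h1 with h1 | h1
    · rw [h] at h1
      exact absurd (pair_eq h1).1 dC.h24
    · exact h1
  have hc2 : c 2 = a 3 := (pair_eq h1').1
  have h2 := M_out3 dA (c 2, c 1) dC.mem2 (by simp [hc2])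
  have h2' : ((c 2, c 1) : V × V) = (a 3, a 4) := by
    rcases h2 with h2 | h2
    · rw [← h1'] at h2
      exact absurd (pair_eq h2).2.symm dC.h13.symm
    · exact h2
  have hc1 : c 1 = a 4 := (pair_eq h2').2
  have h3 := M_in4 dA (c 0, c 1) dC.mem1 (by simp [hc1])
  rw [← h2'] at h3
  exact dC.h02 (pair_eq h3).1

lemma MW_A2C5 (dA : MData E Z1 a) (dC : WData E Z3 c) :
    ((a 1, a 2) : V × V) ≠ (c 4, c 5) := by
  intro h
  have ha2 : a 2 = c 5 := (pair_eq h).2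
  have h1 := M_in2 dA (c 6, c 5) dC.mem6 (by simp [← ha2])
  have h1' : ((c 6, c 5) : V × V) = (a 3, a 2) := by
    rcases h1 with h1 | h1
    · rw [h] at h1
      exact absurd (pair_eq h1).1 dC.h46.symm
    · exact h1
  have hc6 : a 3 = c 6 := ((pair_eq h1').1).symm
  have h2 := W_out6 dC (a 3, a 4) dA.mem4 (by simp [hc6])
  rw [h1'] at h2
  exact dA.h24.symm (pair_eq h2).2

lemma MW_C1A2 (dA : MData E Z1 a) (dC : WData E Z3 c) :
    ((c 0, c 1) : V × V) ≠ (a 1, a 2) := by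
  intro h
  have ha2 : c 1 = a 2 := (pair_eq h).2
  have h1 := M_in2 dA (c 2, c 1) dC.mem2 (by simp [ha2])
  have h1' : ((c 2, c 1) : V × V) = (a 3, a 2) := by
    rcases h1 with h1 | h1
    · rw [← h] at h1
      exact absurd (pair_eq h1).1.symm dC.h02
    · exact h1
  have hc2 : c 2 = a 3 := (pair_eq h1').1
  have h2 := M_out3 dA (c 2, c 3) dC.mem3 (by simp [hc2])
  have h2' : ((c 2, c 3) : V × V) = (a 3, a 4) := by
    rcases h2 with h2 | h2
    · rw [← h1'] at h2
      exact absurd (pair_eq h2).2 dC.h13.symm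
    · exact h2
  have hc3 : c 3 = a 4 := (pair_eq h2').2
  have h3 := M_in4 dA (c 4, c 3) dC.mem4 (by simp [hc3])
  rw [← h2'] at h3
  exact dC.h24.symm (pair_eq h3).1

end Cross
section Main

variable {E S Z Z1 Z2 Z3 : Finset (V × V)} {p : ℕ} {X : Finset V} {a b c : ℕ → V}

/-- The full context extracted from the hypotheses of the main theorem. -/
structure Ctx (E : Finset (V × V)) (p : ℕ) (X : Finset V)
    (Z1 Z2 Z3 : Finset (V × V)) (a b c : ℕ → V) : Prop where
  hN : IsPhyloNet E p X
  dA : MData E Z1 a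
  dB : MData E Z2 b
  dC : WData E Z3 c
  hZ12 : Z1 ≠ Z2
  hclass : ∀ g ∈ E, g ∈ Z1 ∨ g ∈ Z2 ∨ g ∈ Z3 ∨
    ((∀ h ∈ E, h.1 = g.1 → h = g) ∧ (∀ h ∈ E, h.2 = g.2 → h = g))

/-- The "optional" edges. -/
def Dset (a b c : ℕ → V) : Finset (V × V) :=
  {(a 1, a 2), (a 3, a 2), (b 1, b 2), (b 3, b 2),
   (c 2, c 1), (c 2, c 3), (c 4, c 3), (c 4, c 5)}

def Ai (a : ℕ → V) : Fin 2 → V × V := fun i => if i = 0 then (a 1, a 2) else (a 3, a 2)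

def Kk (c : ℕ → V) : Fin 3 → Finset (V × V) := fun k =>
  if k = 0 then {(c 2, c 1), (c 4, c 3)}
  else if k = 1 then {(c 2, c 3), (c 4, c 3)} else {(c 2, c 3), (c 4, c 5)}

def Hset (a b c : ℕ → V) (i j : Fin 2) (k : Fin 3) : Finset (V × V) :=
  insert (Ai a i) (insert (Ai b j) (Kk c k))

def cand (E : Finset (V × V)) (a b c : ℕ → V) (i j : Fin 2) (k : Fin 3) : Finset (V × V) :=
  (E \ Dset a b c) ∪ Hset a b c i j k

lemma Hset_subset_Dset (i j : Fin 2) (k : Fin 3) : Hset a b c i j k ⊆ Dset a b c := by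
  intro x hx
  fin_cases i <;> fin_cases j <;> fin_cases k <;>
    simp [Hset, Ai, Kk, Dset] at hx ⊢ <;> tauto

lemma Dset_subset (K : Ctx E p X Z1 Z2 Z3 a b c) : Dset a b c ⊆ E := by
  intro x hx
  simp only [Dset, Finset.mem_insert, Finset.mem_singleton] at hx
  rcases hx with rfl | rfl | rfl | rfl | rfl | rfl | rfl | rfl
  · exact K.dA.mem2
  · exact K.dA.mem3
  · exact K.dB.mem2
  · exact K.dB.mem3
  · exact K.dC.mem2
  · exact K.dC.mem3
  · exact K.dC.mem4
  · exact K.dC.mem5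

lemma cand_subset (K : Ctx E p X Z1 Z2 Z3 a b c) (i j : Fin 2) (k : Fin 3) :
    cand E a b c i j k ⊆ E :=
  Finset.union_subset (Finset.sdiff_subset)
    ((Hset_subset_Dset i j k).trans (Dset_subset K))

lemma not_in_D_of_unique_in (K : Ctx E p X Z1 Z2 Z3 a b c) {g : V × V}
    (hu : ∀ h ∈ E, h.2 = g.2 → h = g) : g ∉ Dset a b c := by
  intro hg
  simp only [Dset, Finset.mem_insert, Finset.mem_singleton] at hg
  rcases hg with rfl | rfl | rfl | rfl | rfl | rfl | rfl | rfl
  · exact K.dA.h13.symm (pair_eq (hu (a 3, a 2) K.dA.mem3 rfl)).1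
  · exact K.dA.h13 (pair_eq (hu (a 1, a 2) K.dA.mem2 rfl)).1
  · exact K.dB.h13.symm (pair_eq (hu (b 3, b 2) K.dB.mem3 rfl)).1
  · exact K.dB.h13 (pair_eq (hu (b 1, b 2) K.dB.mem2 rfl)).1
  · exact K.dC.h02 (pair_eq (hu (c 0, c 1) K.dC.mem1 rfl)).1
  · exact K.dC.h24.symm (pair_eq (hu (c 4, c 3) K.dC.mem4 rfl)).1
  · exact K.dC.h24 (pair_eq (hu (c 2, c 3) K.dC.mem3 rfl)).1
  · exact K.dC.h46.symm (pair_eq (hu (c 6, c 5) K.dC.mem6 rfl)).1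

lemma not_in_D_of_unique_out (K : Ctx E p X Z1 Z2 Z3 a b c) {g : V × V}
    (hu : ∀ h ∈ E, h.1 = g.1 → h = g) : g ∉ Dset a b c := by
  intro hg
  simp only [Dset, Finset.mem_insert, Finset.mem_singleton] at hg
  rcases hg with rfl | rfl | rfl | rfl | rfl | rfl | rfl | rfl
  · exact K.dA.h02 (pair_eq (hu (a 1, a 0) K.dA.mem1 rfl)).2
  · exact K.dA.h24.symm (pair_eq (hu (a 3, a 4) K.dA.mem4 rfl)).2
  · exact K.dB.h02 (pair_eq (hu (b 1, b 0) K.dB.mem1 rfl)).2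
  · exact K.dB.h24.symm (pair_eq (hu (b 3, b 4) K.dB.mem4 rfl)).2
  · exact K.dC.h13.symm (pair_eq (hu (c 2, c 3) K.dC.mem3 rfl)).2
  · exact K.dC.h13 (pair_eq (hu (c 2, c 1) K.dC.mem2 rfl)).2
  · exact K.dC.h35.symm (pair_eq (hu (c 4, c 5) K.dC.mem5 rfl)).2
  · exact K.dC.h35 (pair_eq (hu (c 4, c 3) K.dC.mem4 rfl)).2

lemma ea1_notin_D (K : Ctx E p X Z1 Z2 Z3 a b c) : ((a 1, a 0) : V × V) ∉ Dset a b c :=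
  not_in_D_of_unique_in K (M_in0 K.dA)

lemma ea4_notin_D (K : Ctx E p X Z1 Z2 Z3 a b c) : ((a 3, a 4) : V × V) ∉ Dset a b c :=
  not_in_D_of_unique_in K (M_in4 K.dA)

lemma eb1_notin_D (K : Ctx E p X Z1 Z2 Z3 a b c) : ((b 1, b 0) : V × V) ∉ Dset a b c :=
  not_in_D_of_unique_in K (M_in0 K.dB)

lemma eb4_notin_D (K : Ctx E p X Z1 Z2 Z3 a b c) : ((b 3, b 4) : V × V) ∉ Dset a b c :=
  not_in_D_of_unique_in K (M_in4 K.dB)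

lemma ec1_notin_D (K : Ctx E p X Z1 Z2 Z3 a b c) : ((c 0, c 1) : V × V) ∉ Dset a b c :=
  not_in_D_of_unique_out K (W_out0 K.dC)

lemma ec6_notin_D (K : Ctx E p X Z1 Z2 Z3 a b c) : ((c 6, c 5) : V × V) ∉ Dset a b c :=
  not_in_D_of_unique_out K (W_out6 K.dC)

/-- The per-trail hitting conditions. -/
def OKpred (a b c : ℕ → V) (S : Finset (V × V)) : Prop :=
  ((a 1, a 2) ∈ S ∨ (a 3, a 2) ∈ S) ∧ ((b 1, b 2) ∈ S ∨ (b 3, b 2) ∈ S) ∧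
  ((c 2, c 3) ∈ S ∨ (c 4, c 3) ∈ S) ∧ ((c 2, c 1) ∈ S ∨ (c 2, c 3) ∈ S) ∧
  ((c 4, c 3) ∈ S ∨ (c 4, c 5) ∈ S)

lemma good_iff (K : Ctx E p X Z1 Z2 Z3 a b c) (S : Finset (V × V)) :
    Good E S ↔ S ⊆ E ∧ E \ Dset a b c ⊆ S ∧ OKpred a b c S := by
  constructor
  · rintro ⟨hS, hgood⟩
    have hgetin : ∀ v : V, (∃ e ∈ E, e.2 = v) → ∃ e ∈ S, e.2 = v := by
      intro v hv
      exact indeg_pos_iff.1 ((hgood v).1 (indeg_pos_iff.2 hv))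
    have hgetout : ∀ v : V, (∃ e ∈ E, e.1 = v) → ∃ e ∈ S, e.1 = v := by
      intro v hv
      exact outdeg_pos_iff.1 ((hgood v).2 (outdeg_pos_iff.2 hv))
    refine ⟨hS, ?_, ?_, ?_, ?_, ?_, ?_⟩
    · -- E \ D ⊆ S
      intro g hg
      obtain ⟨hgE, hgD⟩ := Finset.mem_sdiff.1 hg
      rcases K.hclass g hgE with hg1 | hg2 | hg3 | ⟨hu1, hu2⟩
      · rw [K.dA.hset] at hg1
        simp only [Finset.mem_insert, Finset.mem_singleton] at hg1
        rcases hg1 with rfl | rfl | rfl | rfl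
        · obtain ⟨e, heS, he2⟩ := hgetin (a 0) ⟨_, K.dA.mem1, rfl⟩
          rwa [M_in0 K.dA e (hS heS) he2] at heS
        · exact absurd (by simp [Dset]) hgD
        · exact absurd (by simp [Dset]) hgD
        · obtain ⟨e, heS, he2⟩ := hgetin (a 4) ⟨_, K.dA.mem4, rfl⟩
          rwa [M_in4 K.dA e (hS heS) he2] at heS
      · rw [K.dB.hset] at hg2
        simp only [Finset.mem_insert, Finset.mem_singleton] at hg2
        rcases hg2 with rfl | rfl | rfl | rfl
        · obtain ⟨e, heS, he2⟩ := hgetin (b 0) ⟨_, K.dB.mem1, rfl⟩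
          rwa [M_in0 K.dB e (hS heS) he2] at heS
        · exact absurd (by simp [Dset]) hgD
        · exact absurd (by simp [Dset]) hgD
        · obtain ⟨e, heS, he2⟩ := hgetin (b 4) ⟨_, K.dB.mem4, rfl⟩
          rwa [M_in4 K.dB e (hS heS) he2] at heS
      · rw [K.dC.hset] at hg3
        simp only [Finset.mem_insert, Finset.mem_singleton] at hg3
        rcases hg3 with rfl | rfl | rfl | rfl | rfl | rfl
        · obtain ⟨e, heS, he1⟩ := hgetout (c 0) ⟨_, K.dC.mem1, rfl⟩
          rwa [W_out0 K.dC e (hS heS) he1] at heS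
        · exact absurd (by simp [Dset]) hgD
        · exact absurd (by simp [Dset]) hgD
        · exact absurd (by simp [Dset]) hgD
        · exact absurd (by simp [Dset]) hgD
        · obtain ⟨e, heS, he1⟩ := hgetout (c 6) ⟨_, K.dC.mem6, rfl⟩
          rwa [W_out6 K.dC e (hS heS) he1] at heS
      · obtain ⟨e, heS, he2⟩ := hgetin g.2 ⟨g, hgE, rfl⟩
        rwa [hu2 e (hS heS) he2] at heS
    · obtain ⟨e, heS, he2⟩ := hgetin (a 2) ⟨_, K.dA.mem2, rfl⟩
      rcases M_in2 K.dA e (hS heS) he2 with h | h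
      · exact Or.inl (h ▸ heS)
      · exact Or.inr (h ▸ heS)
    · obtain ⟨e, heS, he2⟩ := hgetin (b 2) ⟨_, K.dB.mem2, rfl⟩
      rcases M_in2 K.dB e (hS heS) he2 with h | h
      · exact Or.inl (h ▸ heS)
      · exact Or.inr (h ▸ heS)
    · obtain ⟨e, heS, he2⟩ := hgetin (c 3) ⟨_, K.dC.mem3, rfl⟩
      rcases W_in3 K.dC e (hS heS) he2 with h | h
      · exact Or.inl (h ▸ heS)
      · exact Or.inr (h ▸ heS)
    · obtain ⟨e, heS, he1⟩ := hgetout (c 2) ⟨_, K.dC.mem2, rfl⟩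
      rcases W_out2 K.dC e (hS heS) he1 with h | h
      · exact Or.inl (h ▸ heS)
      · exact Or.inr (h ▸ heS)
    · obtain ⟨e, heS, he1⟩ := hgetout (c 4) ⟨_, K.dC.mem4, rfl⟩
      rcases W_out4 K.dC e (hS heS) he1 with h | h
      · exact Or.inl (h ▸ heS)
      · exact Or.inr (h ▸ heS)
  · rintro ⟨hS, hbase, hOK1, hOK2, hOK3, hOK4, hOK5⟩
    have hbase' : ∀ g ∈ E, g ∉ Dset a b c → g ∈ S := fun g hg hd =>
      hbase (Finset.mem_sdiff.2 ⟨hg, hd⟩)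
    refine ⟨hS, fun v => ⟨?_, ?_⟩⟩
    · intro hv
      obtain ⟨g, hgE, hg2⟩ := indeg_pos_iff.1 hv
      subst hg2
      apply indeg_pos_iff.2
      rcases K.hclass g hgE with hg1 | hg1 | hg1 | ⟨hu1, hu2⟩
      · rw [K.dA.hset] at hg1
        simp only [Finset.mem_insert, Finset.mem_singleton] at hg1
        rcases hg1 with rfl | rfl | rfl | rfl
        · exact ⟨_, hbase' _ K.dA.mem1 (ea1_notin_D K), rfl⟩
        · rcases hOK1 with h | h
          · exact ⟨_, h, rfl⟩
          · exact ⟨_, h, rfl⟩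
        · rcases hOK1 with h | h
          · exact ⟨_, h, rfl⟩
          · exact ⟨_, h, rfl⟩
        · exact ⟨_, hbase' _ K.dA.mem4 (ea4_notin_D K), rfl⟩
      · rw [K.dB.hset] at hg1
        simp only [Finset.mem_insert, Finset.mem_singleton] at hg1
        rcases hg1 with rfl | rfl | rfl | rfl
        · exact ⟨_, hbase' _ K.dB.mem1 (eb1_notin_D K), rfl⟩
        · rcases hOK2 with h | h
          · exact ⟨_, h, rfl⟩
          · exact ⟨_, h, rfl⟩
        · rcases hOK2 with h | h
          · exact ⟨_, h, rfl⟩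
          · exact ⟨_, h, rfl⟩
        · exact ⟨_, hbase' _ K.dB.mem4 (eb4_notin_D K), rfl⟩
      · rw [K.dC.hset] at hg1
        simp only [Finset.mem_insert, Finset.mem_singleton] at hg1
        rcases hg1 with rfl | rfl | rfl | rfl | rfl | rfl
        · exact ⟨_, hbase' _ K.dC.mem1 (ec1_notin_D K), rfl⟩
        · exact ⟨_, hbase' _ K.dC.mem1 (ec1_notin_D K), rfl⟩
        · rcases hOK3 with h | h
          · exact ⟨_, h, rfl⟩
          · exact ⟨_, h, rfl⟩
        · rcases hOK3 with h | h
          · exact ⟨_, h, rfl⟩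
          · exact ⟨_, h, rfl⟩
        · exact ⟨_, hbase' _ K.dC.mem6 (ec6_notin_D K), rfl⟩
        · exact ⟨_, hbase' _ K.dC.mem6 (ec6_notin_D K), rfl⟩
      · exact ⟨g, hbase' g hgE (not_in_D_of_unique_in K hu2), rfl⟩
    · intro hv
      obtain ⟨g, hgE, hg1⟩ := outdeg_pos_iff.1 hv
      subst hg1
      apply outdeg_pos_iff.2
      rcases K.hclass g hgE with hg1 | hg1 | hg1 | ⟨hu1, hu2⟩
      · rw [K.dA.hset] at hg1
        simp only [Finset.mem_insert, Finset.mem_singleton] at hg1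
        rcases hg1 with rfl | rfl | rfl | rfl
        · exact ⟨_, hbase' _ K.dA.mem1 (ea1_notin_D K), rfl⟩
        · exact ⟨_, hbase' _ K.dA.mem1 (ea1_notin_D K), rfl⟩
        · exact ⟨_, hbase' _ K.dA.mem4 (ea4_notin_D K), rfl⟩
        · exact ⟨_, hbase' _ K.dA.mem4 (ea4_notin_D K), rfl⟩
      · rw [K.dB.hset] at hg1
        simp only [Finset.mem_insert, Finset.mem_singleton] at hg1
        rcases hg1 with rfl | rfl | rfl | rfl
        · exact ⟨_, hbase' _ K.dB.mem1 (eb1_notin_D K), rfl⟩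
        · exact ⟨_, hbase' _ K.dB.mem1 (eb1_notin_D K), rfl⟩
        · exact ⟨_, hbase' _ K.dB.mem4 (eb4_notin_D K), rfl⟩
        · exact ⟨_, hbase' _ K.dB.mem4 (eb4_notin_D K), rfl⟩
      · rw [K.dC.hset] at hg1
        simp only [Finset.mem_insert, Finset.mem_singleton] at hg1
        rcases hg1 with rfl | rfl | rfl | rfl | rfl | rfl
        · exact ⟨_, hbase' _ K.dC.mem1 (ec1_notin_D K), rfl⟩
        · rcases hOK4 with h | h
          · exact ⟨_, h, rfl⟩
          · exact ⟨_, h, rfl⟩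
        · rcases hOK4 with h | h
          · exact ⟨_, h, rfl⟩
          · exact ⟨_, h, rfl⟩
        · rcases hOK5 with h | h
          · exact ⟨_, h, rfl⟩
          · exact ⟨_, h, rfl⟩
        · rcases hOK5 with h | h
          · exact ⟨_, h, rfl⟩
          · exact ⟨_, h, rfl⟩
        · exact ⟨_, hbase' _ K.dC.mem6 (ec6_notin_D K), rfl⟩
      · exact ⟨g, hbase' g hgE (not_in_D_of_unique_out K hu1), rfl⟩

end Main
section Cands

variable {E S Z Z1 Z2 Z3 : Finset (V × V)} {p : ℕ} {X : Finset V} {a b c : ℕ → V}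

-- cross-trail distinctness instances
lemma nA2A3 (K : Ctx E p X Z1 Z2 Z3 a b c) : ((a 1, a 2) : V × V) ≠ (a 3, a 2) :=
  ne_of_fst K.dA.h13
lemma nB2B3 (K : Ctx E p X Z1 Z2 Z3 a b c) : ((b 1, b 2) : V × V) ≠ (b 3, b 2) :=
  ne_of_fst K.dB.h13
lemma nA2B2 (K : Ctx E p X Z1 Z2 Z3 a b c) : ((a 1, a 2) : V × V) ≠ (b 1, b 2) :=
  MM22 K.dA K.dB K.hZ12
lemma nA2B3 (K : Ctx E p X Z1 Z2 Z3 a b c) : ((a 1, a 2) : V × V) ≠ (b 3, b 2) :=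
  MM23 K.dA K.dB K.hZ12
lemma nA3B2 (K : Ctx E p X Z1 Z2 Z3 a b c) : ((a 3, a 2) : V × V) ≠ (b 1, b 2) :=
  (MM23 K.dB K.dA K.hZ12.symm).symm
lemma nA3B3 (K : Ctx E p X Z1 Z2 Z3 a b c) : ((a 3, a 2) : V × V) ≠ (b 3, b 2) := by
  simpa using MM22 (M_rev K.dA) (M_rev K.dB) K.hZ12
lemma nA2C2 (K : Ctx E p X Z1 Z2 Z3 a b c) : ((a 1, a 2) : V × V) ≠ (c 2, c 1) :=
  MW_A2C2 K.dA K.dC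
lemma nA2C3 (K : Ctx E p X Z1 Z2 Z3 a b c) : ((a 1, a 2) : V × V) ≠ (c 2, c 3) :=
  MW_A2C3 K.dA K.dC
lemma nA2C4 (K : Ctx E p X Z1 Z2 Z3 a b c) : ((a 1, a 2) : V × V) ≠ (c 4, c 3) :=
  MW_A2C4 K.dA K.dC
lemma nA2C5 (K : Ctx E p X Z1 Z2 Z3 a b c) : ((a 1, a 2) : V × V) ≠ (c 4, c 5) :=
  MW_A2C5 K.dA K.dC
lemma nA3C2 (K : Ctx E p X Z1 Z2 Z3 a b c) : ((a 3, a 2) : V × V) ≠ (c 2, c 1) := by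
  simpa using MW_A2C2 (M_rev K.dA) K.dC
lemma nA3C3 (K : Ctx E p X Z1 Z2 Z3 a b c) : ((a 3, a 2) : V × V) ≠ (c 2, c 3) := by
  simpa using MW_A2C3 (M_rev K.dA) K.dC
lemma nA3C4 (K : Ctx E p X Z1 Z2 Z3 a b c) : ((a 3, a 2) : V × V) ≠ (c 4, c 3) := by
  simpa using MW_A2C4 (M_rev K.dA) K.dC
lemma nA3C5 (K : Ctx E p X Z1 Z2 Z3 a b c) : ((a 3, a 2) : V × V) ≠ (c 4, c 5) := by
  simpa using MW_A2C5 (M_rev K.dA) K.dC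
lemma nB2C2 (K : Ctx E p X Z1 Z2 Z3 a b c) : ((b 1, b 2) : V × V) ≠ (c 2, c 1) :=
  MW_A2C2 K.dB K.dC
lemma nB2C3 (K : Ctx E p X Z1 Z2 Z3 a b c) : ((b 1, b 2) : V × V) ≠ (c 2, c 3) :=
  MW_A2C3 K.dB K.dC
lemma nB2C4 (K : Ctx E p X Z1 Z2 Z3 a b c) : ((b 1, b 2) : V × V) ≠ (c 4, c 3) :=
  MW_A2C4 K.dB K.dC
lemma nB2C5 (K : Ctx E p X Z1 Z2 Z3 a b c) : ((b 1, b 2) : V × V) ≠ (c 4, c 5) :=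
  MW_A2C5 K.dB K.dC
lemma nB3C2 (K : Ctx E p X Z1 Z2 Z3 a b c) : ((b 3, b 2) : V × V) ≠ (c 2, c 1) := by
  simpa using MW_A2C2 (M_rev K.dB) K.dC
lemma nB3C3 (K : Ctx E p X Z1 Z2 Z3 a b c) : ((b 3, b 2) : V × V) ≠ (c 2, c 3) := by
  simpa using MW_A2C3 (M_rev K.dB) K.dC
lemma nB3C4 (K : Ctx E p X Z1 Z2 Z3 a b c) : ((b 3, b 2) : V × V) ≠ (c 4, c 3) := by
  simpa using MW_A2C4 (M_rev K.dB) K.dC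
lemma nB3C5 (K : Ctx E p X Z1 Z2 Z3 a b c) : ((b 3, b 2) : V × V) ≠ (c 4, c 5) := by
  simpa using MW_A2C5 (M_rev K.dB) K.dC
-- within W
lemma nC2C3 (K : Ctx E p X Z1 Z2 Z3 a b c) : ((c 2, c 1) : V × V) ≠ (c 2, c 3) :=
  ne_of_snd K.dC.h13
lemma nC2C4 (K : Ctx E p X Z1 Z2 Z3 a b c) : ((c 2, c 1) : V × V) ≠ (c 4, c 3) :=
  ne_of_fst K.dC.h24
lemma nC2C5 (K : Ctx E p X Z1 Z2 Z3 a b c) : ((c 2, c 1) : V × V) ≠ (c 4, c 5) :=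
  ne_of_fst K.dC.h24
lemma nC3C4 (K : Ctx E p X Z1 Z2 Z3 a b c) : ((c 2, c 3) : V × V) ≠ (c 4, c 3) :=
  ne_of_fst K.dC.h24
lemma nC3C5 (K : Ctx E p X Z1 Z2 Z3 a b c) : ((c 2, c 3) : V × V) ≠ (c 4, c 5) :=
  ne_of_fst K.dC.h24
lemma nC4C5 (K : Ctx E p X Z1 Z2 Z3 a b c) : ((c 4, c 3) : V × V) ≠ (c 4, c 5) :=
  ne_of_snd K.dC.h35

lemma mem_H_A2 (K : Ctx E p X Z1 Z2 Z3 a b c) {i j : Fin 2} {k : Fin 3} :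
    ((a 1, a 2) : V × V) ∈ Hset a b c i j k ↔ i = 0 := by
  fin_cases i <;> fin_cases j <;> fin_cases k <;>
    simp [Hset, Ai, Kk, nA2A3 K, nA2B2 K, nA2B3 K, nA2C2 K, nA2C3 K, nA2C4 K, nA2C5 K]

lemma mem_H_A3 (K : Ctx E p X Z1 Z2 Z3 a b c) {i j : Fin 2} {k : Fin 3} :
    ((a 3, a 2) : V × V) ∈ Hset a b c i j k ↔ i = 1 := by
  fin_cases i <;> fin_cases j <;> fin_cases k <;>
    simp [Hset, Ai, Kk, (nA2A3 K).symm, nA3B2 K, nA3B3 K, nA3C2 K, nA3C3 K, nA3C4 K,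
      nA3C5 K]

lemma mem_H_B2 (K : Ctx E p X Z1 Z2 Z3 a b c) {i j : Fin 2} {k : Fin 3} :
    ((b 1, b 2) : V × V) ∈ Hset a b c i j k ↔ j = 0 := by
  fin_cases i <;> fin_cases j <;> fin_cases k <;>
    simp [Hset, Ai, Kk, nB2B3 K, (nA2B2 K).symm, (nA3B2 K).symm, nB2C2 K, nB2C3 K,
      nB2C4 K, nB2C5 K]

lemma mem_H_B3 (K : Ctx E p X Z1 Z2 Z3 a b c) {i j : Fin 2} {k : Fin 3} :
    ((b 3, b 2) : V × V) ∈ Hset a b c i j k ↔ j = 1 := by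
  fin_cases i <;> fin_cases j <;> fin_cases k <;>
    simp [Hset, Ai, Kk, (nB2B3 K).symm, (nA2B3 K).symm, (nA3B3 K).symm, nB3C2 K,
      nB3C3 K, nB3C4 K, nB3C5 K]

lemma mem_H_C2 (K : Ctx E p X Z1 Z2 Z3 a b c) {i j : Fin 2} {k : Fin 3} :
    ((c 2, c 1) : V × V) ∈ Hset a b c i j k ↔ k = 0 := by
  fin_cases i <;> fin_cases j <;> fin_cases k <;>
    simp [Hset, Ai, Kk, (nA2C2 K).symm, (nA3C2 K).symm, (nB2C2 K).symm, (nB3C2 K).symm,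
      nC2C3 K, nC2C4 K, nC2C5 K]

lemma mem_H_C3 (K : Ctx E p X Z1 Z2 Z3 a b c) {i j : Fin 2} {k : Fin 3} :
    ((c 2, c 3) : V × V) ∈ Hset a b c i j k ↔ k = 1 ∨ k = 2 := by
  fin_cases i <;> fin_cases j <;> fin_cases k <;>
    simp [Hset, Ai, Kk, (nA2C3 K).symm, (nA3C3 K).symm, (nB2C3 K).symm, (nB3C3 K).symm,
      (nC2C3 K).symm, nC3C4 K, nC3C5 K]

lemma mem_H_C4 (K : Ctx E p X Z1 Z2 Z3 a b c) {i j : Fin 2} {k : Fin 3} :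
    ((c 4, c 3) : V × V) ∈ Hset a b c i j k ↔ k = 0 ∨ k = 1 := by
  fin_cases i <;> fin_cases j <;> fin_cases k <;>
    simp [Hset, Ai, Kk, (nA2C4 K).symm, (nA3C4 K).symm, (nB2C4 K).symm, (nB3C4 K).symm,
      (nC2C4 K).symm, (nC3C4 K).symm, nC4C5 K]

lemma mem_H_C5 (K : Ctx E p X Z1 Z2 Z3 a b c) {i j : Fin 2} {k : Fin 3} :
    ((c 4, c 5) : V × V) ∈ Hset a b c i j k ↔ k = 2 := by
  fin_cases i <;> fin_cases j <;> fin_cases k <;>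
    simp [Hset, Ai, Kk, (nA2C5 K).symm, (nA3C5 K).symm, (nB2C5 K).symm, (nB3C5 K).symm,
      (nC2C5 K).symm, (nC3C5 K).symm, (nC4C5 K).symm]

lemma mem_cand_of_D {i j : Fin 2} {k : Fin 3} {x : V × V} (hxD : x ∈ Dset a b c) :
    x ∈ cand E a b c i j k ↔ x ∈ Hset a b c i j k := by
  constructor
  · intro hx
    rcases Finset.mem_union.1 hx with hx | hx
    · exact absurd (Finset.mem_sdiff.1 hx).2 (not_not.2 hxD)
    · exact hx
  · exact fun hx => Finset.mem_union.2 (Or.inr hx)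

lemma A2_mem_D : ((a 1, a 2) : V × V) ∈ Dset a b c := by simp [Dset]
lemma A3_mem_D : ((a 3, a 2) : V × V) ∈ Dset a b c := by simp [Dset]
lemma B2_mem_D : ((b 1, b 2) : V × V) ∈ Dset a b c := by simp [Dset]
lemma B3_mem_D : ((b 3, b 2) : V × V) ∈ Dset a b c := by simp [Dset]
lemma C2_mem_D : ((c 2, c 1) : V × V) ∈ Dset a b c := by simp [Dset]
lemma C3_mem_D : ((c 2, c 3) : V × V) ∈ Dset a b c := by simp [Dset]
lemma C4_mem_D : ((c 4, c 3) : V × V) ∈ Dset a b c := by simp [Dset]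
lemma C5_mem_D : ((c 4, c 5) : V × V) ∈ Dset a b c := by simp [Dset]

lemma base_subset_cand (i j : Fin 2) (k : Fin 3) :
    E \ Dset a b c ⊆ cand E a b c i j k := Finset.subset_union_left

lemma mem_cand_base (K : Ctx E p X Z1 Z2 Z3 a b c) {i j : Fin 2} {k : Fin 3} {x : V × V}
    (hxE : x ∈ E) (hxD : x ∉ Dset a b c) : x ∈ cand E a b c i j k :=
  base_subset_cand i j k (Finset.mem_sdiff.2 ⟨hxE, hxD⟩)

lemma cand_good (K : Ctx E p X Z1 Z2 Z3 a b c) (i j : Fin 2) (k : Fin 3) :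
    Good E (cand E a b c i j k) := by
  rw [good_iff K]
  refine ⟨cand_subset K i j k, base_subset_cand i j k, ?_⟩
  have hH : Hset a b c i j k ⊆ cand E a b c i j k := Finset.subset_union_right
  refine ⟨?_, ?_, ?_, ?_, ?_⟩
  · rcases (em (i = 0)) with h | h
    · exact Or.inl ((mem_cand_of_D A2_mem_D).2 ((mem_H_A2 K).2 h))
    · exact Or.inr ((mem_cand_of_D A3_mem_D).2 ((mem_H_A3 K).2 (by omega)))
  · rcases (em (j = 0)) with h | h
    · exact Or.inl ((mem_cand_of_D B2_mem_D).2 ((mem_H_B2 K).2 h))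
    · exact Or.inr ((mem_cand_of_D B3_mem_D).2 ((mem_H_B3 K).2 (by omega)))
  · rcases (em (k = 0)) with h | h
    · exact Or.inr ((mem_cand_of_D C4_mem_D).2 ((mem_H_C4 K).2 (Or.inl h)))
    · rcases (em (k = 1)) with h1 | h1
      · exact Or.inl ((mem_cand_of_D C3_mem_D).2 ((mem_H_C3 K).2 (Or.inl h1)))
      · exact Or.inl ((mem_cand_of_D C3_mem_D).2 ((mem_H_C3 K).2 (Or.inr (by omega))))
  · rcases (em (k = 0)) with h | h
    · exact Or.inl ((mem_cand_of_D C2_mem_D).2 ((mem_H_C2 K).2 h))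
    · rcases (em (k = 1)) with h1 | h1
      · exact Or.inr ((mem_cand_of_D C3_mem_D).2 ((mem_H_C3 K).2 (Or.inl h1)))
      · exact Or.inr ((mem_cand_of_D C3_mem_D).2 ((mem_H_C3 K).2 (Or.inr (by omega))))
  · rcases (em (k = 0)) with h | h
    · exact Or.inl ((mem_cand_of_D C4_mem_D).2 ((mem_H_C4 K).2 (Or.inl h)))
    · rcases (em (k = 1)) with h1 | h1
      · exact Or.inl ((mem_cand_of_D C4_mem_D).2 ((mem_H_C4 K).2 (Or.inr h1)))
      · exact Or.inr ((mem_cand_of_D C5_mem_D).2 ((mem_H_C5 K).2 (by omega)))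

end Cands
section MinClass

variable {E S Z Z1 Z2 Z3 : Finset (V × V)} {p : ℕ} {X : Finset V} {a b c : ℕ → V}

lemma cand_minimal (K : Ctx E p X Z1 Z2 Z3 a b c) (i j : Fin 2) (k : Fin 3) :
    ∀ S', Good E S' → ¬ S' ⊂ cand E a b c i j k := by
  intro S' hS' hss
  obtain ⟨hsub', hbase', hOK1, hOK2, hOK3, hOK4, hOK5⟩ := (good_iff K S').1 hS'
  obtain ⟨x, hxc, hxn⟩ := Finset.exists_of_ssubset hss
  have hxH : x ∈ Hset a b c i j k := by
    rcases Finset.mem_union.1 hxc with hx | hx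
    · exact absurd (hbase' hx) hxn
    · exact hx
  have hsubc : S' ⊆ cand E a b c i j k := hss.subset
  have hxD := Hset_subset_Dset i j k hxH
  simp only [Dset, Finset.mem_insert, Finset.mem_singleton] at hxD
  rcases hxD with rfl | rfl | rfl | rfl | rfl | rfl | rfl | rfl
  · have hi : i = 0 := (mem_H_A2 K).1 hxH
    have h3 : ((a 3, a 2) : V × V) ∈ S' := hOK1.resolve_left hxn
    have hi' : i = 1 := (mem_H_A3 K).1 ((mem_cand_of_D A3_mem_D).1 (hsubc h3))
    omega
  · have hi : i = 1 := (mem_H_A3 K).1 hxH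
    have h3 : ((a 1, a 2) : V × V) ∈ S' := hOK1.resolve_right hxn
    have hi' : i = 0 := (mem_H_A2 K).1 ((mem_cand_of_D A2_mem_D).1 (hsubc h3))
    omega
  · have hi : j = 0 := (mem_H_B2 K).1 hxH
    have h3 : ((b 3, b 2) : V × V) ∈ S' := hOK2.resolve_left hxn
    have hi' : j = 1 := (mem_H_B3 K).1 ((mem_cand_of_D B3_mem_D).1 (hsubc h3))
    omega
  · have hi : j = 1 := (mem_H_B3 K).1 hxH
    have h3 : ((b 1, b 2) : V × V) ∈ S' := hOK2.resolve_right hxn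
    have hi' : j = 0 := (mem_H_B2 K).1 ((mem_cand_of_D B2_mem_D).1 (hsubc h3))
    omega
  · have hk : k = 0 := (mem_H_C2 K).1 hxH
    have h3 : ((c 2, c 3) : V × V) ∈ S' := hOK4.resolve_left hxn
    have hk' := (mem_H_C3 K).1 ((mem_cand_of_D C3_mem_D).1 (hsubc h3))
    omega
  · have hk : k = 1 ∨ k = 2 := (mem_H_C3 K).1 hxH
    have h3 : ((c 2, c 1) : V × V) ∈ S' := hOK4.resolve_right hxn
    have hk' : k = 0 := (mem_H_C2 K).1 ((mem_cand_of_D C2_mem_D).1 (hsubc h3))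
    omega
  · have hk : k = 0 ∨ k = 1 := (mem_H_C4 K).1 hxH
    have h3 : ((c 2, c 3) : V × V) ∈ S' := hOK3.resolve_right hxn
    have hk' := (mem_H_C3 K).1 ((mem_cand_of_D C3_mem_D).1 (hsubc h3))
    have h5 : ((c 4, c 5) : V × V) ∈ S' := hOK5.resolve_left hxn
    have hk'' : k = 2 := (mem_H_C5 K).1 ((mem_cand_of_D C5_mem_D).1 (hsubc h5))
    omega
  · have hk : k = 2 := (mem_H_C5 K).1 hxH
    have h3 : ((c 4, c 3) : V × V) ∈ S' := hOK5.resolve_right hxn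
    have hk' := (mem_H_C4 K).1 ((mem_cand_of_D C4_mem_D).1 (hsubc h3))
    omega

lemma minimal_is_cand (K : Ctx E p X Z1 Z2 Z3 a b c) {S : Finset (V × V)} (hg : Good E S)
    (hmin : ∀ S', Good E S' → ¬ S' ⊂ S) : ∃ i j k, S = cand E a b c i j k := by
  obtain ⟨hSE, hbase, hOK1, hOK2, hOK3, hOK4, hOK5⟩ := (good_iff K S).1 hg
  have hA : ∃ i : Fin 2, Ai a i ∈ S := by
    rcases hOK1 with h | h
    · exact ⟨0, by simpa [Ai] using h⟩
    · exact ⟨1, by simpa [Ai] using h⟩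
  have hB : ∃ j : Fin 2, Ai b j ∈ S := by
    rcases hOK2 with h | h
    · exact ⟨0, by simpa [Ai] using h⟩
    · exact ⟨1, by simpa [Ai] using h⟩
  have hC : ∃ k : Fin 3, Kk c k ⊆ S := by
    by_cases h3 : ((c 2, c 3) : V × V) ∈ S
    · by_cases h4 : ((c 4, c 3) : V × V) ∈ S
      · refine ⟨1, ?_⟩
        simp only [Kk, if_true]
        exact Finset.insert_subset h3 (Finset.singleton_subset_iff.2 h4)
      · have h5 := hOK5.resolve_left h4
        refine ⟨2, ?_⟩
        simp only [Kk]
        norm_num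
        exact Finset.insert_subset h3 (Finset.singleton_subset_iff.2 h5)
    · have h2 := hOK4.resolve_right h3
      have h4 := hOK3.resolve_left h3
      refine ⟨0, ?_⟩
      simp only [Kk, if_true]
      exact Finset.insert_subset h2 (Finset.singleton_subset_iff.2 h4)
  obtain ⟨i, hi⟩ := hA
  obtain ⟨j, hj⟩ := hB
  obtain ⟨k, hk⟩ := hC
  have hcs : cand E a b c i j k ⊆ S :=
    Finset.union_subset hbase
      (Finset.insert_subset hi (Finset.insert_subset hj hk))
  have heq : cand E a b c i j k = S := by
    by_contra hne
    exact hmin _ (cand_good K i j k) (Finset.ssubset_iff_subset_ne.2 ⟨hcs, hne⟩)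
  exact ⟨i, j, k, heq.symm⟩

lemma mem_cand_A2 (K : Ctx E p X Z1 Z2 Z3 a b c) {i j : Fin 2} {k : Fin 3} :
    ((a 1, a 2) : V × V) ∈ cand E a b c i j k ↔ i = 0 :=
  (mem_cand_of_D A2_mem_D).trans (mem_H_A2 K)
lemma mem_cand_A3 (K : Ctx E p X Z1 Z2 Z3 a b c) {i j : Fin 2} {k : Fin 3} :
    ((a 3, a 2) : V × V) ∈ cand E a b c i j k ↔ i = 1 :=
  (mem_cand_of_D A3_mem_D).trans (mem_H_A3 K)
lemma mem_cand_B2 (K : Ctx E p X Z1 Z2 Z3 a b c) {i j : Fin 2} {k : Fin 3} :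
    ((b 1, b 2) : V × V) ∈ cand E a b c i j k ↔ j = 0 :=
  (mem_cand_of_D B2_mem_D).trans (mem_H_B2 K)
lemma mem_cand_B3 (K : Ctx E p X Z1 Z2 Z3 a b c) {i j : Fin 2} {k : Fin 3} :
    ((b 3, b 2) : V × V) ∈ cand E a b c i j k ↔ j = 1 :=
  (mem_cand_of_D B3_mem_D).trans (mem_H_B3 K)
lemma mem_cand_C2 (K : Ctx E p X Z1 Z2 Z3 a b c) {i j : Fin 2} {k : Fin 3} :
    ((c 2, c 1) : V × V) ∈ cand E a b c i j k ↔ k = 0 :=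
  (mem_cand_of_D C2_mem_D).trans (mem_H_C2 K)
lemma mem_cand_C3 (K : Ctx E p X Z1 Z2 Z3 a b c) {i j : Fin 2} {k : Fin 3} :
    ((c 2, c 3) : V × V) ∈ cand E a b c i j k ↔ k = 1 ∨ k = 2 :=
  (mem_cand_of_D C3_mem_D).trans (mem_H_C3 K)
lemma mem_cand_C4 (K : Ctx E p X Z1 Z2 Z3 a b c) {i j : Fin 2} {k : Fin 3} :
    ((c 4, c 3) : V × V) ∈ cand E a b c i j k ↔ k = 0 ∨ k = 1 :=
  (mem_cand_of_D C4_mem_D).trans (mem_H_C4 K)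
lemma mem_cand_C5 (K : Ctx E p X Z1 Z2 Z3 a b c) {i j : Fin 2} {k : Fin 3} :
    ((c 4, c 5) : V × V) ∈ cand E a b c i j k ↔ k = 2 :=
  (mem_cand_of_D C5_mem_D).trans (mem_H_C5 K)

lemma cand_injective (K : Ctx E p X Z1 Z2 Z3 a b c) :
    Function.Injective (fun t : Fin 2 × Fin 2 × Fin 3 => cand E a b c t.1 t.2.1 t.2.2) := by
  rintro ⟨i, j, k⟩ ⟨i', j', k'⟩ h
  simp only at h
  have hi : (i = 0) ↔ (i' = 0) := by
    rw [← mem_cand_A2 (i := i) (j := j) (k := k) K, h, mem_cand_A2 K]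
  have hj : (j = 0) ↔ (j' = 0) := by
    rw [← mem_cand_B2 (i := i) (j := j) (k := k) K, h, mem_cand_B2 K]
  have hk0 : (k = 0) ↔ (k' = 0) := by
    rw [← mem_cand_C2 (i := i) (j := j) (k := k) K, h, mem_cand_C2 K]
  have hk2 : (k = 2) ↔ (k' = 2) := by
    rw [← mem_cand_C5 (i := i) (j := j) (k := k) K, h, mem_cand_C5 K]
  simp only [Prod.mk.injEq]
  omega

end MinClass
section Retic

variable {E S Z Z1 Z2 Z3 : Finset (V × V)} {p : ℕ} {X : Finset V} {a b c : ℕ → V}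

lemma indeg_two_cases (K : Ctx E p X Z1 Z2 Z3 a b c) (i j : Fin 2) (k : Fin 3) {v : V}
    (hv : indeg (cand E a b c i j k) v = 2) :
    (k = 0 ∧ v = c 1) ∨ (k = 1 ∧ v = c 3) ∨ (k = 2 ∧ v = c 5) := by
  have hSE : cand E a b c i j k ⊆ E := cand_subset K i j k
  have hpos : 0 < indeg (cand E a b c i j k) v := by omega
  obtain ⟨g, hgS, hg2⟩ := indeg_pos_iff.1 hpos
  have hgE := hSE hgS
  have hle : ∀ x : V × V, (∀ h ∈ cand E a b c i j k, h.2 = v → h = x) → False := by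
    intro x hx
    have hsub : (cand E a b c i j k).filter (fun e => e.2 = v) ⊆ {x} := by
      intro h hh
      rw [Finset.mem_filter] at hh
      rw [Finset.mem_singleton]
      exact hx h hh.1 hh.2
    have hcc := Finset.card_le_card hsub
    rw [indeg] at hv
    rw [Finset.card_singleton] at hcc
    omega
  subst hg2
  rcases K.hclass g hgE with h1 | h1 | h1 | ⟨hu1, hu2⟩
  · rw [K.dA.hset] at h1
    simp only [Finset.mem_insert, Finset.mem_singleton] at h1
    rcases h1 with rfl | rfl | rfl | rfl
    · exact (hle _ (fun h hh h2 => M_in0 K.dA h (hSE hh) h2)).elim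
    · rcases em (i = 0) with hi | hi
      · have hA3 : ((a 3, a 2) : V × V) ∉ cand E a b c i j k := by
          rw [mem_cand_A3 K]; omega
        refine (hle (a 1, a 2) ?_).elim
        intro h hh h2
        rcases M_in2 K.dA h (hSE hh) h2 with h' | h'
        · exact h'
        · exact absurd (h' ▸ hh) hA3
      · have hA2 : ((a 1, a 2) : V × V) ∉ cand E a b c i j k := by
          rw [mem_cand_A2 K]; omega
        refine (hle (a 3, a 2) ?_).elim
        intro h hh h2
        rcases M_in2 K.dA h (hSE hh) h2 with h' | h'
        · exact absurd (h' ▸ hh) hA2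
        · exact h'
    · rcases em (i = 0) with hi | hi
      · have hA3 : ((a 3, a 2) : V × V) ∉ cand E a b c i j k := by
          rw [mem_cand_A3 K]; omega
        refine (hle (a 1, a 2) ?_).elim
        intro h hh h2
        rcases M_in2 K.dA h (hSE hh) h2 with h' | h'
        · exact h'
        · exact absurd (h' ▸ hh) hA3
      · have hA2 : ((a 1, a 2) : V × V) ∉ cand E a b c i j k := by
          rw [mem_cand_A2 K]; omega
        refine (hle (a 3, a 2) ?_).elim
        intro h hh h2
        rcases M_in2 K.dA h (hSE hh) h2 with h' | h'
        · exact absurd (h' ▸ hh) hA2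
        · exact h'
    · exact (hle _ (fun h hh h2 => M_in4 K.dA h (hSE hh) h2)).elim
  · rw [K.dB.hset] at h1
    simp only [Finset.mem_insert, Finset.mem_singleton] at h1
    rcases h1 with rfl | rfl | rfl | rfl
    · exact (hle _ (fun h hh h2 => M_in0 K.dB h (hSE hh) h2)).elim
    · rcases em (j = 0) with hi | hi
      · have hA3 : ((b 3, b 2) : V × V) ∉ cand E a b c i j k := by
          rw [mem_cand_B3 K]; omega
        refine (hle (b 1, b 2) ?_).elim
        intro h hh h2
        rcases M_in2 K.dB h (hSE hh) h2 with h' | h'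
        · exact h'
        · exact absurd (h' ▸ hh) hA3
      · have hA2 : ((b 1, b 2) : V × V) ∉ cand E a b c i j k := by
          rw [mem_cand_B2 K]; omega
        refine (hle (b 3, b 2) ?_).elim
        intro h hh h2
        rcases M_in2 K.dB h (hSE hh) h2 with h' | h'
        · exact absurd (h' ▸ hh) hA2
        · exact h'
    · rcases em (j = 0) with hi | hi
      · have hA3 : ((b 3, b 2) : V × V) ∉ cand E a b c i j k := by
          rw [mem_cand_B3 K]; omega
        refine (hle (b 1, b 2) ?_).elim
        intro h hh h2
        rcases M_in2 K.dB h (hSE hh) h2 with h' | h'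
        · exact h'
        · exact absurd (h' ▸ hh) hA3
      · have hA2 : ((b 1, b 2) : V × V) ∉ cand E a b c i j k := by
          rw [mem_cand_B2 K]; omega
        refine (hle (b 3, b 2) ?_).elim
        intro h hh h2
        rcases M_in2 K.dB h (hSE hh) h2 with h' | h'
        · exact absurd (h' ▸ hh) hA2
        · exact h'
    · exact (hle _ (fun h hh h2 => M_in4 K.dB h (hSE hh) h2)).elim
  · rw [K.dC.hset] at h1
    simp only [Finset.mem_insert, Finset.mem_singleton] at h1
    have hc1case : ∀ hgg : (g : V × V).2 = c 1, (k = 0 ∧ g.2 = c 1) ∨ (k = 1 ∧ g.2 = c 3)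
        ∨ (k = 2 ∧ g.2 = c 5) := by
      intro hgg
      rcases em (k = 0) with hk | hk
      · exact Or.inl ⟨hk, hgg⟩
      · exfalso
        have hC2 : ((c 2, c 1) : V × V) ∉ cand E a b c i j k := by
          rw [mem_cand_C2 K]; omega
        refine hle (c 0, c 1) ?_
        intro h hh h2
        rcases W_in1 K.dC h (hSE hh) (by rw [h2, hgg]) with h' | h'
        · exact h'
        · exact absurd (h' ▸ hh) hC2
    have hc3case : ∀ hgg : (g : V × V).2 = c 3, (k = 0 ∧ g.2 = c 1) ∨ (k = 1 ∧ g.2 = c 3)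
        ∨ (k = 2 ∧ g.2 = c 5) := by
      intro hgg
      rcases em (k = 1) with hk | hk
      · exact Or.inr (Or.inl ⟨hk, hgg⟩)
      · exfalso
        rcases em (k = 0) with hk0 | hk0
        · have hC3 : ((c 2, c 3) : V × V) ∉ cand E a b c i j k := by
            rw [mem_cand_C3 K]; omega
          refine hle (c 4, c 3) ?_
          intro h hh h2
          rcases W_in3 K.dC h (hSE hh) (by rw [h2, hgg]) with h' | h'
          · exact absurd (h' ▸ hh) hC3
          · exact h'
        · have hC4 : ((c 4, c 3) : V × V) ∉ cand E a b c i j k := by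
            rw [mem_cand_C4 K]; omega
          refine hle (c 2, c 3) ?_
          intro h hh h2
          rcases W_in3 K.dC h (hSE hh) (by rw [h2, hgg]) with h' | h'
          · exact h'
          · exact absurd (h' ▸ hh) hC4
    have hc5case : ∀ hgg : (g : V × V).2 = c 5, (k = 0 ∧ g.2 = c 1) ∨ (k = 1 ∧ g.2 = c 3)
        ∨ (k = 2 ∧ g.2 = c 5) := by
      intro hgg
      rcases em (k = 2) with hk | hk
      · exact Or.inr (Or.inr ⟨hk, hgg⟩)
      · exfalso
        have hC5 : ((c 4, c 5) : V × V) ∉ cand E a b c i j k := by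
          rw [mem_cand_C5 K]; omega
        refine hle (c 6, c 5) ?_
        intro h hh h2
        rcases W_in5 K.dC h (hSE hh) (by rw [h2, hgg]) with h' | h'
        · exact absurd (h' ▸ hh) hC5
        · exact h'
    rcases h1 with rfl | rfl | rfl | rfl | rfl | rfl
    · exact hc1case rfl
    · exact hc1case rfl
    · exact hc3case rfl
    · exact hc3case rfl
    · exact hc5case rfl
    · exact hc5case rfl
  · exact (hle _ (fun h hh h2 => hu2 h (hSE hh) h2)).elim

lemma cand_retic (K : Ctx E p X Z1 Z2 Z3 a b c) (i j : Fin 2) (k : Fin 3) :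
    ((verts (cand E a b c i j k)).filter fun v => indeg (cand E a b c i j k) v = 2).card
      = 1 := by
  have hSE : cand E a b c i j k ⊆ E := cand_subset K i j k
  have hec1 : ((c 0, c 1) : V × V) ∈ cand E a b c i j k :=
    mem_cand_base K K.dC.mem1 (ec1_notin_D K)
  have hec6 : ((c 6, c 5) : V × V) ∈ cand E a b c i j k :=
    mem_cand_base K K.dC.mem6 (ec6_notin_D K)
  have key : ∀ w : V, (k = 0 ∧ w = c 1) ∨ (k = 1 ∧ w = c 3) ∨ (k = 2 ∧ w = c 5) →
      indeg (cand E a b c i j k) w = 2 →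
      ((verts (cand E a b c i j k)).filter
        fun v => indeg (cand E a b c i j k) v = 2) = {w} := by
    intro w hw hindeg
    apply Finset.eq_singleton_iff_unique_mem.2
    constructor
    · rw [Finset.mem_filter]
      refine ⟨?_, hindeg⟩
      rcases hw with ⟨hk, rfl⟩ | ⟨hk, rfl⟩ | ⟨hk, rfl⟩
      · exact snd_mem_verts hec1
      · exact snd_mem_verts ((mem_cand_C3 K).2 (Or.inl hk))
      · exact snd_mem_verts hec6
    · intro v hv
      rw [Finset.mem_filter] at hv
      have := indeg_two_cases K i j k hv.2
      rcases hw with ⟨hk, rfl⟩ | ⟨hk, rfl⟩ | ⟨hk, rfl⟩ <;> subst hk <;>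
        rcases this with ⟨hk', rfl⟩ | ⟨hk', rfl⟩ | ⟨hk', rfl⟩ <;> simp_all
  have hpair : ∀ (x y : V × V) (w : V), x ∈ cand E a b c i j k → y ∈ cand E a b c i j k →
      x ≠ y → x.2 = w → y.2 = w →
      (∀ h ∈ E, h.2 = w → h = x ∨ h = y) → indeg (cand E a b c i j k) w = 2 := by
    intro x y w hx hy hxy hx2 hy2 hu
    have hfil : (cand E a b c i j k).filter (fun e => e.2 = w) = {x, y} := by
      ext h
      rw [Finset.mem_filter]
      constructor
      · rintro ⟨hh, hh2⟩
        rcases hu h (hSE hh) hh2 with h' | h' <;> simp [h']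
      · intro hh
        rcases Finset.mem_insert.1 hh with rfl | hh
        · exact ⟨hx, hx2⟩
        · rw [Finset.mem_singleton] at hh
          subst hh
          exact ⟨hy, hy2⟩
    rw [indeg, hfil, Finset.card_insert_of_notMem (by simp [hxy]), Finset.card_singleton]
  rcases em (k = 0) with hk | hk
  · have h2 : indeg (cand E a b c i j k) (c 1) = 2 := by
      refine hpair (c 0, c 1) (c 2, c 1) (c 1) hec1 ((mem_cand_C2 K).2 hk)
        (ne_of_fst K.dC.h02) rfl rfl ?_
      exact fun h hh h2 => W_in1 K.dC h hh h2
    rw [key (c 1) (Or.inl ⟨hk, rfl⟩) h2, Finset.card_singleton]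
  · rcases em (k = 1) with hk1 | hk1
    · have h2 : indeg (cand E a b c i j k) (c 3) = 2 := by
        refine hpair (c 2, c 3) (c 4, c 3) (c 3) ((mem_cand_C3 K).2 (Or.inl hk1))
          ((mem_cand_C4 K).2 (Or.inr hk1)) (nC3C4 K) rfl rfl ?_
        exact fun h hh h2 => W_in3 K.dC h hh h2
      rw [key (c 3) (Or.inr (Or.inl ⟨hk1, rfl⟩)) h2, Finset.card_singleton]
    · have hk2 : k = 2 := by omega
      have h2 : indeg (cand E a b c i j k) (c 5) = 2 := by
        refine hpair (c 4, c 5) (c 6, c 5) (c 5) ((mem_cand_C5 K).2 hk2) hec6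
          (ne_of_fst K.dC.h46) rfl rfl ?_
        exact fun h hh h2 => W_in5 K.dC h hh h2
      rw [key (c 5) (Or.inr (Or.inr ⟨hk2, rfl⟩)) h2, Finset.card_singleton]

end Retic

/-- A `p`-rooted almost-binary phylogenetic network whose maximal zig-zag trail
decomposition consists of exactly two M-fences of length 4, exactly one W-fence of
length 6, and N-fences of length 1 has exactly 12 minimal support networks, each with
exactly one reticulation. -/
theorem stmt19 (p : ℕ) (hp : 1 ≤ p) (X : Finset V) (hX : X.Nonempty)
    (E : Finset (V × V)) (hN : IsPhyloNet E p X)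
    (htypes : ∀ Z, IsMaximalZigzagTrail E Z →
      (IsMFence Z ∧ Z.card = 4) ∨ (IsWFence Z ∧ Z.card = 6) ∨ (IsNFence Z ∧ Z.card = 1))
    (hM : Set.ncard {Z | IsMaximalZigzagTrail E Z ∧ IsMFence Z ∧ Z.card = 4} = 2)
    (hW : ∃! Z, IsMaximalZigzagTrail E Z ∧ IsWFence Z) :
    Set.ncard {S | IsMinimalSupportNet E S p X} = 12 ∧
    ∀ S, IsMinimalSupportNet E S p X →
      ((verts S).filter fun v => indeg S v = 2).card = 1 := by
  classical
  obtain ⟨Z1, Z2, hZ12, hMset⟩ := Set.ncard_eq_two.mp hM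
  have hZ1mem : Z1 ∈ {Z | IsMaximalZigzagTrail E Z ∧ IsMFence Z ∧ Z.card = 4} := by
    rw [hMset]; exact Set.mem_insert _ _
  have hZ2mem : Z2 ∈ {Z | IsMaximalZigzagTrail E Z ∧ IsMFence Z ∧ Z.card = 4} := by
    rw [hMset]; exact Set.mem_insert_of_mem _ rfl
  obtain ⟨hmax1, hMF1, hcard1⟩ := hZ1mem
  obtain ⟨hmax2, hMF2, hcard2⟩ := hZ2mem
  obtain ⟨a, dA⟩ := mdata_mk hmax1 hMF1 hcard1
  obtain ⟨b, dB⟩ := mdata_mk hmax2 hMF2 hcard2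
  obtain ⟨Z3, ⟨hmax3, hWF3⟩, hWuniq⟩ := hW
  have hcard3 : Z3.card = 6 := by
    rcases htypes Z3 hmax3 with ⟨hMF, hc⟩ | ⟨hWF', hc⟩ | ⟨hNF, hc⟩
    · exfalso
      obtain ⟨-, m, fm, h1m, h2m, hnem, hshm⟩ := hMF
      have hm4 : m = 4 := by rw [← card_of_shape hshm, hc]
      subst hm4
      obtain ⟨-, mw, fw, h1w, h2w, hnew, hshw⟩ := hWF3
      have hw4 : mw = 4 := by rw [← card_of_shape hshw, hc]
      subst hw4
      exact MW4_absurd hshm hnem hshw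
    · exact hc
    · exfalso
      obtain ⟨-, mw, fw, h1w, h2w, hnew, hshw⟩ := hWF3
      have hw1 : mw = 1 := by rw [← card_of_shape hshw, hc]
      omega
  obtain ⟨c, dC⟩ := wdata_mk hN hmax3 hWF3 hcard3
  have hclass : ∀ g ∈ E, g ∈ Z1 ∨ g ∈ Z2 ∨ g ∈ Z3 ∨
      ((∀ h ∈ E, h.1 = g.1 → h = g) ∧ (∀ h ∈ E, h.2 = g.2 → h = g)) := by
    intro g hg
    obtain ⟨T, hgT, hmaxT⟩ := exists_max_trail hg
    rcases htypes T hmaxT with ⟨hMF, hc⟩ | ⟨hWF, -⟩ | ⟨hNF, hc⟩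
    · have hTmem : T ∈ ({Z1, Z2} : Set (Finset (V × V))) := by
        rw [← hMset]; exact ⟨hmaxT, hMF, hc⟩
      rcases hTmem with rfl | hT
      · exact Or.inl hgT
      · rw [Set.mem_singleton_iff] at hT
        subst hT
        exact Or.inr (Or.inl hgT)
    · have hT : T = Z3 := hWuniq T ⟨hmaxT, hWF⟩
      subst hT
      exact Or.inr (Or.inr (Or.inl hgT))
    · refine Or.inr (Or.inr (Or.inr ?_))
      have hTg : T = {g} := by
        obtain ⟨x, hx⟩ := Finset.card_eq_one.1 hc
        rw [hx] at hgT
        rw [Finset.mem_singleton] at hgT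
        rw [hx, hgT]
      exact N_star hmaxT hTg
  have K : Ctx E p X Z1 Z2 Z3 a b c := ⟨hN, dA, dB, dC, hZ12, hclass⟩
  constructor
  · have hseteq : {S | IsMinimalSupportNet E S p X} =
        ↑((Finset.univ : Finset (Fin 2 × Fin 2 × Fin 3)).image
          (fun t => cand E a b c t.1 t.2.1 t.2.2)) := by
      ext S
      simp only [Set.mem_setOf_eq, Finset.coe_image, Set.mem_image, Finset.mem_coe,
        Finset.mem_univ]
      constructor
      · intro hS
        obtain ⟨hg, hmin⟩ := (minimalSupportNet_iff hN).1 hS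
        obtain ⟨i, j, k, hijk⟩ := minimal_is_cand K hg hmin
        exact ⟨(i, j, k), trivial, hijk.symm⟩
      · rintro ⟨⟨i, j, k⟩, -, rfl⟩
        exact (minimalSupportNet_iff hN).2 ⟨cand_good K i j k, cand_minimal K i j k⟩
    rw [hseteq, Set.ncard_coe_finset, Finset.card_image_of_injective _ (cand_injective K)]
    simp
  · intro S hS
    obtain ⟨hg, hmin⟩ := (minimalSupportNet_iff hN).1 hS
    obtain ⟨i, j, k, rfl⟩ := minimal_is_cand K hg hmin
    exact cand_retic K i j k
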